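/- arXiv:1112.4549 — 3 statements merged into one kernel-verified Lean document; each statement's English description precedes it below -/
import Mathlib

section
/- Let Λ be a finitely aligned k-graph such that Λ⁰ is finite and Λ contains no cycles, i.e. no λ ∈ Λ ∖ Λ⁰ with r(λ) = s(λ). Then for every Cuntz–Krieger Λ-family {t_λ : λ ∈ Λ} in a C*-algebra B, the C*-subalgebra of B generated by {t_λ : λ ∈ Λ} is AF. -/
open scoped ComplexOrder ENat

/-- A higher-rank graph (`k`-graph): a countable small category `Λ` together with a degree
functor `d : Λ → ℕᵏ` satisfying the unique factorisation property.  Morphisms ("paths") form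
the type `Path`; vertices are identified with the paths of degree `0`.  Composition is encoded
as a total function `comp` whose axioms only apply to composable pairs (`s μ = r ν`). -/
structure KGraph (k : ℕ) : Type 1 where
  Path : Type
  countable : Countable Path
  d : Path → Fin k → ℕ
  r : Path → Path
  s : Path → Path
  comp : Path → Path → Path
  d_r : ∀ lam, d (r lam) = 0
  d_s : ∀ lam, d (s lam) = 0
  r_vertex : ∀ v, d v = 0 → r v = v
  s_vertex : ∀ v, d v = 0 → s v = v
  r_comp : ∀ mu nu, s mu = r nu → r (comp mu nu) = r mu
  s_comp : ∀ mu nu, s mu = r nu → s (comp mu nu) = s nu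
  d_comp : ∀ mu nu, s mu = r nu → d (comp mu nu) = d mu + d nu
  comp_assoc : ∀ lam mu nu, s lam = r mu → s mu = r nu →
    comp (comp lam mu) nu = comp lam (comp mu nu)
  id_comp : ∀ lam, comp (r lam) lam = lam
  comp_id : ∀ lam, comp lam (s lam) = lam
  factor : ∀ (lam : Path) (m n : Fin k → ℕ), d lam = m + n →
    ∃! p : Path × Path, d p.1 = m ∧ d p.2 = n ∧ s p.1 = r p.2 ∧ comp p.1 p.2 = lam

namespace KGraph

variable {k : ℕ} (Λ : KGraph k)

/-- `v` is a vertex, i.e. a path of degree `0`. -/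
def IsVertex (v : Λ.Path) : Prop := Λ.d v = 0

/-- The set of minimal common extensions of `mu` and `nu`. -/
def MCE (mu nu : Λ.Path) : Set Λ.Path :=
  {lam | Λ.d lam = Λ.d mu ⊔ Λ.d nu ∧
    (∃ α, Λ.s mu = Λ.r α ∧ Λ.comp mu α = lam) ∧
    (∃ β, Λ.s nu = Λ.r β ∧ Λ.comp nu β = lam)}

/-- Pairs `(α, β)` with `μα = νβ ∈ MCE (μ, ν)`. -/
def MCEPairs (mu nu : Λ.Path) : Set (Λ.Path × Λ.Path) :=
  {p | Λ.s mu = Λ.r p.1 ∧ Λ.s nu = Λ.r p.2 ∧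
    Λ.comp mu p.1 = Λ.comp nu p.2 ∧ Λ.comp mu p.1 ∈ Λ.MCE mu nu}

/-- `Λ` is finitely aligned if all sets of minimal common extensions are finite. -/
def FinitelyAligned : Prop := ∀ mu nu : Λ.Path, (Λ.MCE mu nu).Finite

/-- `Λ` is row-finite if `vΛⁿ` is finite for every vertex `v` and `n ∈ ℕᵏ`. -/
def RowFinite : Prop :=
  ∀ (v : Λ.Path) (n : Fin k → ℕ), Λ.IsVertex v → {lam | Λ.r lam = v ∧ Λ.d lam = n}.Finite

/-- `Λ` is locally convex. -/
def LocallyConvex : Prop :=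
  ∀ i j : Fin k, i ≠ j → ∀ mu : Λ.Path, Λ.d mu = Pi.single i 1 →
    (∃ e, Λ.r e = Λ.r mu ∧ Λ.d e = Pi.single j 1) →
    ∃ e, Λ.r e = Λ.s mu ∧ Λ.d e = Pi.single j 1

/-- A subset `F ⊆ vΛ` is exhaustive if every `λ ∈ vΛ` has a common extension with some
member of `F`. -/
def Exhaustive (v : Λ.Path) (F : Set Λ.Path) : Prop :=
  ∀ lam, Λ.r lam = v → ∃ mu ∈ F, (Λ.MCE lam mu).Nonempty

/-- A generalised cycle: a pair of distinct paths `μ ≠ ν` with the same range and source such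
that every extension of `μ` has a common extension with `ν`. -/
def IsGenCycle (mu nu : Λ.Path) : Prop :=
  mu ≠ nu ∧ Λ.s mu = Λ.s nu ∧ Λ.r mu = Λ.r nu ∧
    ∀ τ, Λ.r τ = Λ.s mu → (Λ.MCE (Λ.comp mu τ) nu).Nonempty

/-- An entrance to the generalised cycle `(μ, ν)`. -/
def IsEntrance (mu nu τ : Λ.Path) : Prop :=
  Λ.r τ = Λ.s nu ∧ Λ.MCE (Λ.comp nu τ) mu = ∅

/-- A (conventional) cycle: a path of nonzero degree whose range and source coincide. -/
def IsCycle (lam : Λ.Path) : Prop := Λ.d lam ≠ 0 ∧ Λ.r lam = Λ.s lam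

/-- `Λ` contains no (conventional) cycles. -/
def NoCycles : Prop := ∀ lam : Λ.Path, Λ.r lam = Λ.s lam → Λ.d lam = 0

/-- A vertex `v` with `vΛ = {v}`. -/
def IsSource (v : Λ.Path) : Prop :=
  Λ.IsVertex v ∧ ∀ lam, Λ.r lam = v → lam = v

/-- `Ext (μ; E)`. -/
def Ext (mu : Λ.Path) (E : Set Λ.Path) : Set Λ.Path :=
  {τ | Λ.r τ = Λ.s mu ∧ ∃ nu ∈ E, Λ.comp mu τ ∈ Λ.MCE mu nu}

/-- No cycle in `Λ` has an entrance. -/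
def NoCycleHasEntrance : Prop :=
  ∀ lam, Λ.IsCycle lam → ∀ τ, Λ.r τ = Λ.r lam → (Λ.MCE τ lam).Nonempty

/-- `x` encodes a path of degree `m ∈ (ℕ ∪ {∞})ᵏ` in `Λ`, i.e. a degree-preserving functor
`Ω_{k,m} → Λ`, recorded as a total function on pairs `(p, q)`; only the values with
`p ≤ q ≤ m` are constrained. -/
def IsPathFun (m : Fin k → ℕ∞) (x : (Fin k → ℕ) → (Fin k → ℕ) → Λ.Path) : Prop :=
  (∀ p q : Fin k → ℕ, p ≤ q → (∀ i, (q i : ℕ∞) ≤ m i) → Λ.d (x p q) = q - p) ∧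
  (∀ p q : Fin k → ℕ, p ≤ q → (∀ i, (q i : ℕ∞) ≤ m i) →
    Λ.r (x p q) = x p p ∧ Λ.s (x p q) = x q q) ∧
  (∀ p q u : Fin k → ℕ, p ≤ q → q ≤ u → (∀ i, (u i : ℕ∞) ≤ m i) →
    Λ.comp (x p q) (x q u) = x p u)

/-- `x` is a boundary path of degree `m`. -/
def IsBoundaryFun (m : Fin k → ℕ∞) (x : (Fin k → ℕ) → (Fin k → ℕ) → Λ.Path) : Prop :=
  Λ.IsPathFun m x ∧
  ∀ p : Fin k → ℕ, (∀ i, (p i : ℕ∞) ≤ m i) →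
    ∀ E : Set Λ.Path, E.Finite → (∀ lam ∈ E, Λ.r lam = x p p) → Λ.Exhaustive (x p p) E →
      ∃ mu ∈ E, (∀ i, ((p i + Λ.d mu i : ℕ) : ℕ∞) ≤ m i) ∧ x p (p + Λ.d mu) = mu

/-- A path function `x` of degree `m` belongs to `Λ^{≤∞}`. -/
def IsLeInftyPath (m : Fin k → ℕ∞) (x : (Fin k → ℕ) → (Fin k → ℕ) → Λ.Path) : Prop :=
  Λ.IsPathFun m x ∧
  ∀ n : Fin k → ℕ, (∀ i, (n i : ℕ∞) ≤ m i) → ∀ i, (n i : ℕ∞) = m i →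
    ∀ e, ¬(Λ.r e = x n n ∧ Λ.d e = Pi.single i 1)

/-- The degree of `τ^∞` for a cycle (or initial cycle) `τ`: `∞` in the coordinates where
`d τ` is nonzero, `0` elsewhere. -/
def degInf (τ : Λ.Path) : Fin k → ℕ∞ := fun i => if Λ.d τ i = 0 then 0 else ⊤

/-- An initial cycle: `r μ = s μ` and `r(μ)Λ^{eᵢ} = ∅` whenever `d(μ)ᵢ = 0`. -/
def IsInitialCycle (mu : Λ.Path) : Prop :=
  Λ.r mu = Λ.s mu ∧
  ∀ i, Λ.d mu i = 0 → ∀ e, ¬(Λ.r e = Λ.r mu ∧ Λ.d e = Pi.single i 1)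

/-- `x` is (the path function of) `μ^∞` for the initial cycle `μ`. -/
def IsInfIterate (mu : Λ.Path) (x : (Fin k → ℕ) → (Fin k → ℕ) → Λ.Path) : Prop :=
  Λ.IsPathFun (Λ.degInf mu) x ∧ x 0 0 = Λ.r mu ∧
    ∀ n : ℕ, x (n • Λ.d mu) ((n + 1) • Λ.d mu) = mu

/-- Membership in `Λ^{≤ n}`. -/
def LePath (n : Fin k → ℕ) (lam : Λ.Path) : Prop :=
  Λ.d lam ≤ n ∧
    ∀ i, Λ.d lam i < n i → ∀ e, ¬(Λ.r e = Λ.s lam ∧ Λ.d e = Pi.single i 1)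

/-- Minimal common extensions computed inside a subset `S` of `Λ` (all data lying in `S`). -/
def MCEWithin (S : Set Λ.Path) (mu nu : Λ.Path) : Set Λ.Path :=
  {lam | lam ∈ S ∧ Λ.d lam = Λ.d mu ⊔ Λ.d nu ∧
    (∃ α ∈ S, Λ.s mu = Λ.r α ∧ Λ.comp mu α = lam) ∧
    (∃ β ∈ S, Λ.s nu = Λ.r β ∧ Λ.comp nu β = lam)}

/-- Generalised cycles of the sub-`k`-graph determined by a subset `S` of `Λ`. -/
def IsGenCycleWithin (S : Set Λ.Path) (mu nu : Λ.Path) : Prop :=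
  mu ≠ nu ∧ Λ.s mu = Λ.s nu ∧ Λ.r mu = Λ.r nu ∧
    ∀ τ ∈ S, Λ.r τ = Λ.s mu → (Λ.MCEWithin S (Λ.comp mu τ) nu).Nonempty

end KGraph

/-- A Cuntz–Krieger `Λ`-family in a `*`-ring `B`: (CK1) the vertex elements are mutually
orthogonal projections, (CK2) multiplicativity, (CK3) the Cuntz–Krieger relation for
`t_μ* t_ν`, and (CK4) the exhaustivity relation (stated for an arbitrary ordering of the
finite exhaustive set). -/
structure CKFamily {k : ℕ} (Λ : KGraph k) (B : Type*) [NonUnitalRing B] [StarRing B] where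
  t : Λ.Path → B
  selfadjoint : ∀ v, Λ.IsVertex v → star (t v) = t v
  idem : ∀ v, Λ.IsVertex v → t v * t v = t v
  orth : ∀ v w, Λ.IsVertex v → Λ.IsVertex w → v ≠ w → t v * t w = 0
  mul_eq : ∀ mu nu, Λ.s mu = Λ.r nu → t mu * t nu = t (Λ.comp mu nu)
  ck3 : ∀ mu nu, star (t mu) * t nu = ∑ᶠ p ∈ Λ.MCEPairs mu nu, t p.1 * star (t p.2)
  ck4 : ∀ v, Λ.IsVertex v → ∀ (a : Λ.Path) (l : List Λ.Path), (a :: l).Nodup →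
    (∀ lam ∈ a :: l, Λ.r lam = v) → Λ.Exhaustive v {lam | lam ∈ a :: l} →
    (l.map fun lam => t v - t lam * star (t lam)).foldl (· * ·)
      (t v - t a * star (t a)) = 0

/-- A C*-algebra is AF (approximately finite-dimensional) if it contains an increasing
sequence of finite-dimensional `*`-subalgebras whose union is dense. -/
def IsAF (A : Type*) [NonUnitalNormedRing A] [StarRing A] [NormedSpace ℂ A] : Prop :=
  ∃ S : ℕ → NonUnitalStarSubalgebra ℂ A, Monotone S ∧
    (∀ n, FiniteDimensional ℂ (S n)) ∧ Dense (⋃ n, (S n : Set A))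

/-- A closed `*`-subalgebra of `A`, presented as a subset `S`, is AF if it contains an
increasing sequence of finite-dimensional `*`-subalgebras of `A` whose union is dense in `S`. -/
def IsAFIn (A : Type*) [NonUnitalNormedRing A] [StarRing A] [NormedSpace ℂ A]
    (S : Set A) : Prop :=
  ∃ T : ℕ → NonUnitalStarSubalgebra ℂ A, Monotone T ∧ (∀ n, (T n : Set A) ⊆ S) ∧
    (∀ n, FiniteDimensional ℂ (T n)) ∧ ∀ x ∈ S, x ∈ closure (⋃ n, (T n : Set A))


namespace KGraph

variable {k : ℕ} (Λ : KGraph k)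

/-- Total length (degree sum) of a path. -/
def len (lam : Λ.Path) : ℕ := ∑ i, Λ.d lam i

lemma len_eq_zero {lam : Λ.Path} (h : Λ.len lam = 0) : Λ.d lam = 0 := by
  funext i
  have := (Finset.sum_eq_zero_iff.mp h) i (Finset.mem_univ i)
  simpa using this

lemma len_pos {lam : Λ.Path} (h : Λ.d lam ≠ 0) : 0 < Λ.len lam := by
  rcases Nat.eq_zero_or_pos (Λ.len lam) with h0 | h0
  · exact absurd (Λ.len_eq_zero h0) h
  · exact h0

lemma len_of_d_zero {lam : Λ.Path} (h : Λ.d lam = 0) : Λ.len lam = 0 := by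
  simp [len, h]

lemma len_comp {mu nu : Λ.Path} (h : Λ.s mu = Λ.r nu) :
    Λ.len (Λ.comp mu nu) = Λ.len mu + Λ.len nu := by
  simp [len, Λ.d_comp mu nu h, Finset.sum_add_distrib]

lemma split (lam : Λ.Path) {m n : Fin k → ℕ} (h : Λ.d lam = m + n) :
    ∃ p q : Λ.Path, Λ.d p = m ∧ Λ.d q = n ∧ Λ.s p = Λ.r q ∧ Λ.comp p q = lam := by
  obtain ⟨pq, hpq, -⟩ := Λ.factor lam m n h
  exact ⟨pq.1, pq.2, hpq.1, hpq.2.1, hpq.2.2.1, hpq.2.2.2⟩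

lemma split_unique (lam : Λ.Path) {m n : Fin k → ℕ} (h : Λ.d lam = m + n)
    {p q p' q' : Λ.Path} (h1 : Λ.d p = m) (h2 : Λ.d q = n) (h3 : Λ.s p = Λ.r q)
    (h4 : Λ.comp p q = lam) (h1' : Λ.d p' = m) (h2' : Λ.d q' = n) (h3' : Λ.s p' = Λ.r q')
    (h4' : Λ.comp p' q' = lam) : p = p' ∧ q = q' := by
  obtain ⟨pq, -, huniq⟩ := Λ.factor lam m n h
  have e1 : (p, q) = pq := huniq (p, q) ⟨h1, h2, h3, h4⟩
  have e2 : (p', q') = pq := huniq (p', q') ⟨h1', h2', h3', h4'⟩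
  rw [← e2] at e1
  exact ⟨congrArg Prod.fst e1, congrArg Prod.snd e1⟩

/-- Cancel the left factor of a composition: the right factor is determined. -/
lemma comp_right_cancel {x a a' : Λ.Path} (h1 : Λ.s x = Λ.r a) (h2 : Λ.s x = Λ.r a')
    (h : Λ.comp x a = Λ.comp x a') : a = a' := by
  have hd : Λ.d (Λ.comp x a) = Λ.d x + Λ.d a := Λ.d_comp x a h1
  have hd' : Λ.d (Λ.comp x a') = Λ.d x + Λ.d a' := Λ.d_comp x a' h2
  have hda : Λ.d a = Λ.d a' := by
    have := hd.symm.trans (h ▸ hd')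
    exact add_left_cancel this
  exact (Λ.split_unique (Λ.comp x a) hd rfl rfl h1 rfl rfl hda.symm h2 h.symm).2

end KGraph

namespace KGraph

variable {k : ℕ} (Λ : KGraph k)

open Classical in
noncomputable def chain (lam : Λ.Path) : ℕ → (Fin k → ℕ)
  | 0 => 0
  | j + 1 =>
    let m := chain lam j
    if h : ∃ i, m i < Λ.d lam i then m + Pi.single h.choose 1 else m

lemma chain_le (lam : Λ.Path) : ∀ j, Λ.chain lam j ≤ Λ.d lam := by
  intro j
  induction j with
  | zero => intro i; simp [chain]
  | succ j ih =>
    intro i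
    rw [chain]
    dsimp only
    split_ifs with h
    · have hc := h.choose_spec
      simp only [Pi.add_apply, Pi.single_apply]
      rcases eq_or_ne i h.choose with he | he
      · subst he; simpa using hc
      · simpa [he] using ih i
    · exact ih i

lemma chain_sum (lam : Λ.Path) : ∀ j, ∑ i, Λ.chain lam j i = min j (Λ.len lam) := by
  intro j
  induction j with
  | zero => simp [chain]
  | succ j ih =>
    rw [chain]
    split_ifs with h
    · have hc := h.choose_spec
      have hlt : ∑ i, Λ.chain lam j i < Λ.len lam := by
        refine Finset.sum_lt_sum (fun i _ => Λ.chain_le lam j i) ⟨h.choose, Finset.mem_univ _, hc⟩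
      have hj : j < Λ.len lam := by
        rcases le_or_gt (Λ.len lam) j with hle | hlt'
        · rw [ih] at hlt; omega
        · exact hlt'
      have : ∑ i, ((Λ.chain lam j + Pi.single h.choose 1 : Fin k → ℕ)) i
          = (∑ i, Λ.chain lam j i) + ∑ i, (Pi.single h.choose 1 : Fin k → ℕ) i := by
        simp [Finset.sum_add_distrib]
      rw [this, Finset.sum_pi_single']
      simp only [Finset.mem_univ, if_pos]
      omega
    · push_neg at h
      have heq : Λ.chain lam j = Λ.d lam := by
        funext i; exact le_antisymm (Λ.chain_le lam j i) (h i)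
      have : ∑ i, Λ.chain lam j i = Λ.len lam := by rw [heq]; rfl
      omega

lemma chain_mono (lam : Λ.Path) : Monotone (Λ.chain lam) := by
  apply monotone_nat_of_le_succ
  intro j i
  rw [chain]
  dsimp only
  split_ifs with h
  · simp only [Pi.add_apply]; omega
  · exact le_refl _

open Classical in
noncomputable def vtx (lam : Λ.Path) (m : Fin k → ℕ) : Λ.Path :=
  if h : ∃ pq : Λ.Path × Λ.Path, Λ.d pq.1 = m ∧ Λ.d pq.2 = Λ.d lam - m ∧
      Λ.s pq.1 = Λ.r pq.2 ∧ Λ.comp pq.1 pq.2 = lam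
  then Λ.s h.choose.1 else lam

lemma vtx_eq (lam : Λ.Path) {m : Fin k → ℕ} (hm : m ≤ Λ.d lam) {p q : Λ.Path}
    (h1 : Λ.d p = m) (h3 : Λ.s p = Λ.r q) (h4 : Λ.comp p q = lam) :
    Λ.vtx lam m = Λ.s p := by
  have hd : Λ.d lam = m + (Λ.d lam - m) := by
    funext i; have hmi : m i ≤ Λ.d lam i := hm i
    simp only [Pi.add_apply, Pi.sub_apply]; omega
  have h2 : Λ.d q = Λ.d lam - m := by
    have := Λ.d_comp p q h3
    rw [h4, h1] at this
    funext i
    have := congrFun this i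
    have h5 := hm i
    simp only [Pi.add_apply, Pi.sub_apply] at *
    omega
  have hex : ∃ pq : Λ.Path × Λ.Path, Λ.d pq.1 = m ∧ Λ.d pq.2 = Λ.d lam - m ∧
      Λ.s pq.1 = Λ.r pq.2 ∧ Λ.comp pq.1 pq.2 = lam := ⟨(p, q), h1, h2, h3, h4⟩
  rw [vtx, dif_pos hex]
  obtain ⟨c1, c2, c3, c4⟩ := hex.choose_spec
  have := Λ.split_unique lam hd c1 c2 c3 c4 h1 h2 h3 h4
  rw [this.1]

lemma vtx_exists (lam : Λ.Path) {m : Fin k → ℕ} (hm : m ≤ Λ.d lam) :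
    ∃ p q : Λ.Path, Λ.d p = m ∧ Λ.d q = Λ.d lam - m ∧ Λ.s p = Λ.r q ∧
      Λ.comp p q = lam ∧ Λ.vtx lam m = Λ.s p := by
  have hd : Λ.d lam = m + (Λ.d lam - m) := by
    funext i; have hmi : m i ≤ Λ.d lam i := hm i
    simp only [Pi.add_apply, Pi.sub_apply]; omega
  obtain ⟨p, q, h1, h2, h3, h4⟩ := Λ.split lam hd
  exact ⟨p, q, h1, h2, h3, h4, Λ.vtx_eq lam hm h1 h3 h4⟩

lemma vtx_isVertex (lam : Λ.Path) {m : Fin k → ℕ} (hm : m ≤ Λ.d lam) :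
    Λ.IsVertex (Λ.vtx lam m) := by
  obtain ⟨p, q, -, -, -, -, h5⟩ := Λ.vtx_exists lam hm
  rw [h5]
  exact Λ.d_s p

lemma vtx_ne (hnc : Λ.NoCycles) (lam : Λ.Path) {m m' : Fin k → ℕ}
    (hmm : m ≤ m') (hm' : m' ≤ Λ.d lam) (hne : m ≠ m') :
    Λ.vtx lam m ≠ Λ.vtx lam m' := by
  have hm : m ≤ Λ.d lam := le_trans hmm hm'
  obtain ⟨p, q, h1, h2, h3, h4, h5⟩ := Λ.vtx_exists lam hm
  have hq : Λ.d q = (m' - m) + (Λ.d lam - m') := by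
    funext i
    have e1 := congrFun h2 i
    have e2 := hmm i; have e3 := hm' i
    simp only [Pi.add_apply, Pi.sub_apply] at *
    omega
  obtain ⟨q1, q2, g1, g2, g3, g4⟩ := Λ.split q hq
  have hrq1 : Λ.r q1 = Λ.s p := by
    rw [← Λ.r_comp q1 q2 g3, g4, ← h3]
  have hspq1 : Λ.s p = Λ.r q1 := hrq1.symm
  have hcomp : Λ.comp (Λ.comp p q1) q2 = lam := by
    rw [Λ.comp_assoc p q1 q2 hspq1 g3, g4, h4]
  have hd1 : Λ.d (Λ.comp p q1) = m' := by
    rw [Λ.d_comp p q1 hspq1, h1, g1]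
    funext i
    have h9 : m i ≤ m' i := hmm i
    simp only [Pi.add_apply, Pi.sub_apply]
    omega
  have hs1 : Λ.s (Λ.comp p q1) = Λ.r q2 := by
    rw [Λ.s_comp p q1 hspq1]; exact g3
  have hv' : Λ.vtx lam m' = Λ.s q1 := by
    rw [Λ.vtx_eq lam hm' hd1 hs1 hcomp, Λ.s_comp p q1 hspq1]
  intro hcon
  rw [h5, hv'] at hcon
  have : Λ.r q1 = Λ.s q1 := by rw [hrq1, hcon]
  have hd0 : Λ.d q1 = 0 := hnc q1 this
  rw [g1] at hd0
  apply hne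
  funext i
  have e1 := congrFun hd0 i
  have e2 : m i ≤ m' i := hmm i
  simp only [Pi.sub_apply, Pi.zero_apply] at e1
  omega

lemma len_lt (hfin : {v : Λ.Path | Λ.IsVertex v}.Finite) (hnc : Λ.NoCycles)
    (lam : Λ.Path) : Λ.len lam < hfin.toFinset.card := by
  set N := hfin.toFinset.card with hN
  by_contra hcon
  push_neg at hcon
  have hmap : ∀ j : Fin (N + 1), Λ.vtx lam (Λ.chain lam j) ∈ hfin.toFinset := by
    intro j
    rw [Set.Finite.mem_toFinset]
    exact Λ.vtx_isVertex lam (Λ.chain_le lam j)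
  have hcard : hfin.toFinset.card < Fintype.card (Fin (N + 1)) := by
    simp [hN]
  obtain ⟨j, -, j', -, hjj', heq⟩ :=
    Finset.exists_ne_map_eq_of_card_lt_of_maps_to
      (by simpa using hcard : hfin.toFinset.card < (Finset.univ : Finset (Fin (N+1))).card)
      (fun j _ => hmap j)
  -- wlog j < j'
  have key : ∀ a b : Fin (N + 1), a < b →
      Λ.vtx lam (Λ.chain lam a) = Λ.vtx lam (Λ.chain lam b) → False := by
    intro a b hab hveq
    have h1 : Λ.chain lam a ≤ Λ.chain lam b := Λ.chain_mono lam (le_of_lt hab)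
    have h2 : Λ.chain lam b ≤ Λ.d lam := Λ.chain_le lam b
    have hsa : ∑ i, Λ.chain lam a i = (a : ℕ) := by
      rw [Λ.chain_sum lam a]
      have : (a : ℕ) ≤ N := Nat.le_of_lt_succ a.isLt
      omega
    have hsb : ∑ i, Λ.chain lam b i = (b : ℕ) := by
      rw [Λ.chain_sum lam b]
      have : (b : ℕ) ≤ N := Nat.le_of_lt_succ b.isLt
      omega
    have hne : Λ.chain lam a ≠ Λ.chain lam b := by
      intro hc
      rw [hc] at hsa
      rw [hsa] at hsb
      exact absurd (Fin.ext hsb) (ne_of_lt hab)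
    exact Λ.vtx_ne hnc lam h1 h2 hne hveq
  rcases lt_or_gt_of_ne hjj' with h | h
  · exact key j j' h heq
  · exact key j' j h heq.symm

end KGraph

namespace KGraph

variable {k : ℕ} (Λ : KGraph k)

open Classical in
noncomputable def rk (v : Λ.Path) : ℕ :=
  sSup {n | ∃ lam, Λ.r lam = v ∧ Λ.len lam = n}

lemma rk_bddAbove (hfin : {v : Λ.Path | Λ.IsVertex v}.Finite) (hnc : Λ.NoCycles)
    (v : Λ.Path) :
    BddAbove {n | ∃ lam, Λ.r lam = v ∧ Λ.len lam = n} := by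
  refine ⟨hfin.toFinset.card, ?_⟩
  rintro n ⟨lam, -, rfl⟩
  exact le_of_lt (Λ.len_lt hfin hnc lam)

lemma rk_nonempty {v : Λ.Path} (hv : Λ.IsVertex v) :
    ({n | ∃ lam, Λ.r lam = v ∧ Λ.len lam = n} : Set ℕ).Nonempty :=
  ⟨0, v, Λ.r_vertex v hv, Λ.len_of_d_zero hv⟩

lemma rk_lt (hfin : {v : Λ.Path | Λ.IsVertex v}.Finite) (hnc : Λ.NoCycles)
    {v : Λ.Path} (hv : Λ.IsVertex v) : Λ.rk v < hfin.toFinset.card := by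
  have hmem := Nat.sSup_mem (Λ.rk_nonempty hv) (Λ.rk_bddAbove hfin hnc v)
  obtain ⟨lam, -, hlen⟩ := hmem
  rw [rk, ← hlen]
  exact Λ.len_lt hfin hnc lam

lemma rk_add_len_le (hfin : {v : Λ.Path | Λ.IsVertex v}.Finite) (hnc : Λ.NoCycles)
    (x : Λ.Path) : Λ.rk (Λ.s x) + Λ.len x ≤ Λ.rk (Λ.r x) := by
  have hsv : Λ.IsVertex (Λ.s x) := Λ.d_s x
  have hmem := Nat.sSup_mem (Λ.rk_nonempty hsv) (Λ.rk_bddAbove hfin hnc (Λ.s x))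
  obtain ⟨mu, hmu, hlen⟩ := hmem
  have hco : Λ.s x = Λ.r mu := hmu.symm
  have hr : Λ.r (Λ.comp x mu) = Λ.r x := Λ.r_comp x mu hco
  have hl : Λ.len (Λ.comp x mu) = Λ.len x + Λ.len mu := Λ.len_comp hco
  have : Λ.len (Λ.comp x mu) ∈ {n | ∃ lam, Λ.r lam = Λ.r x ∧ Λ.len lam = n} :=
    ⟨Λ.comp x mu, hr, rfl⟩
  have hle := le_csSup (Λ.rk_bddAbove hfin hnc (Λ.r x)) this
  rw [hl] at hle
  have h1 : Λ.rk (Λ.s x) = Λ.len mu := by rw [rk]; exact hlen.symm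
  have h2 : Λ.len x + Λ.len mu ≤ Λ.rk (Λ.r x) := by rw [rk]; exact hle
  omega

lemma rk_lt_of_nontrivial (hfin : {v : Λ.Path | Λ.IsVertex v}.Finite) (hnc : Λ.NoCycles)
    {x : Λ.Path} (hx : Λ.d x ≠ 0) :
    Λ.rk (Λ.s x) < Λ.rk (Λ.r x) := by
  have h1 := Λ.rk_add_len_le hfin hnc x
  have h2 := Λ.len_pos hx
  omega

/-- `a` is the tail of a minimal common extension of `x` and `y` over `x`. -/
def IsTail (x y a : Λ.Path) : Prop :=
  Λ.s x = Λ.r a ∧ Λ.comp x a ∈ Λ.MCE x y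

def TailsOf (S : Set Λ.Path) : Set Λ.Path :=
  {a | ∃ x ∈ S, ∃ y ∈ S, Λ.IsTail x y a}

lemma mce_symm (x y : Λ.Path) : Λ.MCE x y = Λ.MCE y x := by
  ext lam
  simp only [MCE, Set.mem_setOf_eq, sup_comm (Λ.d x) (Λ.d y)]
  tauto

lemma tailsOf_mono {S S' : Set Λ.Path} (h : S ⊆ S') : Λ.TailsOf S ⊆ Λ.TailsOf S' := by
  rintro a ⟨x, hx, y, hy, ht⟩
  exact ⟨x, h hx, y, h hy, ht⟩

lemma isTail_d {x y a : Λ.Path} (h : Λ.IsTail x y a) :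
    Λ.d a = (Λ.d x ⊔ Λ.d y) - Λ.d x := by
  obtain ⟨h1, h2, -⟩ := h
  have hd := Λ.d_comp x a h1
  rw [h2] at hd
  funext i
  have e := congrFun hd i
  simp only [Pi.add_apply, Pi.sup_apply, Pi.sub_apply] at *
  omega

lemma isTail_finite (hFA : Λ.FinitelyAligned) (x y : Λ.Path) :
    {a | Λ.IsTail x y a}.Finite := by
  have himg : (fun a => Λ.comp x a) '' {a | Λ.IsTail x y a} ⊆ Λ.MCE x y := by
    rintro - ⟨a, ha, rfl⟩
    exact ha.2
  refine Set.Finite.of_finite_image ((hFA x y).subset himg) ?_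
  rintro a ha a' ha' heq
  exact Λ.comp_right_cancel ha.1 ha'.1 heq

lemma tailsOf_finite (hFA : Λ.FinitelyAligned) {S : Set Λ.Path} (hS : S.Finite) :
    (Λ.TailsOf S).Finite := by
  have : Λ.TailsOf S ⊆ ⋃ x ∈ S, ⋃ y ∈ S, {a | Λ.IsTail x y a} := by
    rintro a ⟨x, hx, y, hy, ht⟩
    simp only [Set.mem_iUnion]
    exact ⟨x, hx, y, hy, ht⟩
  refine Set.Finite.subset ?_ this
  exact hS.biUnion (fun x _ => hS.biUnion (fun y _ => Λ.isTail_finite hFA x y))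

/-- If `x` is a vertex then the only tails of `(x, y)` are `y` itself. -/
lemma isTail_vertex {x y a : Λ.Path} (hx : Λ.d x = 0) (h : Λ.IsTail x y a) : a = y := by
  obtain ⟨h1, h2⟩ := h
  have hxv : Λ.s x = x := Λ.s_vertex x hx
  have hra : Λ.r a = x := by rw [← h1, hxv]
  have hca : Λ.comp x a = a := by rw [← hra, Λ.id_comp a]
  rw [hca] at h2
  obtain ⟨hd, -, ⟨b, hb1, hb2⟩⟩ := h2
  have hd' : Λ.d a = Λ.d y := by
    funext i
    have := congrFun hd i
    have hx' := congrFun hx i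
    simp only [Pi.sup_apply, Pi.zero_apply] at *
    omega
  have hdb : Λ.d b = 0 := by
    have := Λ.d_comp y b hb1
    rw [hb2, hd'] at this
    have : Λ.d y + Λ.d b = Λ.d y + 0 := by rw [← this]; simp
    exact add_left_cancel this
  have hbv : b = Λ.s y := by rw [← Λ.r_vertex b hdb, ← hb1]
  rw [← hb2, hbv, Λ.comp_id y]

lemma mce_r {x y lam : Λ.Path} (h : lam ∈ Λ.MCE x y) :
    Λ.r lam = Λ.r x ∧ Λ.r x = Λ.r y := by
  obtain ⟨-, ⟨a, ha1, ha2⟩, ⟨b, hb1, hb2⟩⟩ := h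
  constructor
  · rw [← ha2, Λ.r_comp x a ha1]
  · rw [← Λ.r_comp x a ha1, ha2, ← hb2, Λ.r_comp y b hb1]

/-- Stages of the tail-closure of a set of paths. -/
def stage (E : Set Λ.Path) : ℕ → Set Λ.Path
  | 0 => E ∪ (Λ.s '' E)
  | j + 1 => stage E j ∪ Λ.TailsOf (stage E j)

lemma stage_mono_succ (E : Set Λ.Path) (j : ℕ) : Λ.stage E j ⊆ Λ.stage E (j + 1) :=
  Set.subset_union_left

lemma stage_mono (E : Set Λ.Path) : Monotone (Λ.stage E) :=
  monotone_nat_of_le_succ (Λ.stage_mono_succ E)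

lemma stage_mono_E {E E' : Set Λ.Path} (h : E ⊆ E') (j : ℕ) :
    Λ.stage E j ⊆ Λ.stage E' j := by
  induction j with
  | zero => exact Set.union_subset_union h (Set.image_mono h)
  | succ j ih => exact Set.union_subset_union ih (Λ.tailsOf_mono ih)

lemma stage_finite (hFA : Λ.FinitelyAligned) {E : Set Λ.Path} (hE : E.Finite) (j : ℕ) :
    (Λ.stage E j).Finite := by
  induction j with
  | zero => exact hE.union (hE.image _)
  | succ j ih => exact ih.union (Λ.tailsOf_finite hFA ih)

lemma stage_new_bound (hfin : {v : Λ.Path | Λ.IsVertex v}.Finite) (hnc : Λ.NoCycles)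
    (E : Set Λ.Path) :
    ∀ j, ∀ z ∈ Λ.stage E (j + 1), z ∉ Λ.stage E j →
      Λ.rk (Λ.r z) + j < hfin.toFinset.card := by
  intro j
  induction j with
  | zero =>
    intro z _ _
    have : Λ.IsVertex (Λ.r z) := Λ.d_r z
    simpa using Λ.rk_lt hfin hnc this
  | succ j ih =>
    intro z hz hzn
    have hz' : z ∈ Λ.TailsOf (Λ.stage E (j + 1)) := by
      rcases hz with h | h
      · exact absurd h hzn
      · exact h
    obtain ⟨x, hx, y, hy, ht⟩ := hz'
    -- not both parents are old
    have hnotboth : x ∉ Λ.stage E j ∨ y ∉ Λ.stage E j := by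
      by_contra hcon
      push_neg at hcon
      exact hzn (Or.inr ⟨x, hcon.1, y, hcon.2, ht⟩)
    -- x is not a vertex
    have hdx : Λ.d x ≠ 0 := by
      intro h0
      exact hzn (by rw [Λ.isTail_vertex h0 ht]; exact hy)
    have hrz : Λ.r z = Λ.s x := ht.1.symm
    have hlt : Λ.rk (Λ.r z) < Λ.rk (Λ.r x) := by
      rw [hrz]
      exact Λ.rk_lt_of_nontrivial hfin hnc hdx
    have hrxy : Λ.r x = Λ.r y := (Λ.mce_r ht.2).2
    rcases hnotboth with hnew | hnew
    · have := ih x hx hnew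
      omega
    · have := ih y hy hnew
      rw [← hrxy] at this
      omega

lemma stage_stab (hfin : {v : Λ.Path | Λ.IsVertex v}.Finite) (hnc : Λ.NoCycles)
    (E : Set Λ.Path) :
    Λ.TailsOf (Λ.stage E hfin.toFinset.card) ⊆ Λ.stage E hfin.toFinset.card := by
  intro z hz
  by_contra hzn
  have hz1 : z ∈ Λ.stage E (hfin.toFinset.card + 1) := Or.inr hz
  have := Λ.stage_new_bound hfin hnc E hfin.toFinset.card z hz1 hzn
  omega

end KGraph

namespace KGraph

/-- Membership in the set of composites of elements of `S`. -/
inductive CompMem {k : ℕ} (Λ : KGraph k) (S : Set Λ.Path) : Λ.Path → Prop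
  | base {x : Λ.Path} : x ∈ S → CompMem Λ S x
  | step {x y : Λ.Path} : x ∈ S → CompMem Λ S y → Λ.s x = Λ.r y →
      CompMem Λ S (Λ.comp x y)

variable {k : ℕ} (Λ : KGraph k)

lemma compMem_mono {S S' : Set Λ.Path} (h : S ⊆ S') {z : Λ.Path}
    (hz : Λ.CompMem S z) : Λ.CompMem S' z := by
  induction hz with
  | base hx => exact CompMem.base (h hx)
  | step hx _ hsr ih => exact CompMem.step (h hx) ih hsr

lemma compMem_comp {S : Set Λ.Path} {z1 z2 : Λ.Path} (h1 : Λ.CompMem S z1)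
    (h2 : Λ.CompMem S z2) (h : Λ.s z1 = Λ.r z2) : Λ.CompMem S (Λ.comp z1 z2) := by
  induction h1 with
  | base hx => exact CompMem.step hx h2 h
  | @step x y hx hy hsr ih =>
    have hsy : Λ.s y = Λ.r z2 := by rw [← Λ.s_comp x y hsr]; exact h
    rw [Λ.comp_assoc x y z2 hsr hsy]
    exact CompMem.step hx (ih hsy) (by rw [Λ.r_comp y z2 hsy]; exact hsr)

/-- Peel off a nontrivial head from a composite. -/
lemma compMem_cases {S : Set Λ.Path} {z : Λ.Path} (hz : Λ.CompMem S z) :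
    z ∈ S ∨ ∃ b e, b ∈ S ∧ Λ.d b ≠ 0 ∧ Λ.CompMem S e ∧ Λ.d e ≠ 0 ∧
      Λ.s b = Λ.r e ∧ z = Λ.comp b e := by
  induction hz with
  | base hx => exact Or.inl hx
  | @step x y hx hy hsr ih =>
    by_cases hdx : Λ.d x = 0
    · have hxr : x = Λ.r y := by rw [← Λ.s_vertex x hdx]; exact hsr
      have : Λ.comp x y = y := by rw [hxr, Λ.id_comp y]
      rw [this]
      exact ih
    · by_cases hdy : Λ.d y = 0
      · have hyv : y = Λ.s x := by rw [← Λ.r_vertex y hdy, ← hsr]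
        have : Λ.comp x y = x := by rw [hyv, Λ.comp_id x]
        rw [this]
        exact Or.inl hx
      · exact Or.inr ⟨x, y, hx, hdx, hy, hdy, hsr, rfl⟩

/-- Stages of composites, for the finiteness proof. -/
def cstage (S : Set Λ.Path) : ℕ → Set Λ.Path
  | 0 => S
  | j + 1 => S ∪ {z | ∃ x ∈ S, ∃ y ∈ cstage S j, Λ.s x = Λ.r y ∧ z = Λ.comp x y}

lemma cstage_mono_succ (S : Set Λ.Path) : ∀ j, Λ.cstage S j ⊆ Λ.cstage S (j + 1) := by
  intro j
  induction j with
  | zero => exact Set.subset_union_left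
  | succ j ih =>
    rintro z (h | ⟨x, hx, y, hy, hsr, rfl⟩)
    · exact Or.inl h
    · exact Or.inr ⟨x, hx, y, ih hy, hsr, rfl⟩

lemma cstage_mono (S : Set Λ.Path) : Monotone (Λ.cstage S) :=
  monotone_nat_of_le_succ (Λ.cstage_mono_succ S)

lemma cstage_finite {S : Set Λ.Path} (hS : S.Finite) (j : ℕ) : (Λ.cstage S j).Finite := by
  induction j with
  | zero => exact hS
  | succ j ih =>
    refine hS.union (Set.Finite.subset ((hS.prod ih).image
      (fun p => Λ.comp p.1 p.2)) ?_)
    rintro z ⟨x, hx, y, hy, -, rfl⟩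
    exact ⟨(x, y), ⟨hx, hy⟩, rfl⟩

lemma compMem_cstage {S : Set Λ.Path} {z : Λ.Path} (hz : Λ.CompMem S z) :
    z ∈ Λ.cstage S (Λ.len z) := by
  induction hz with
  | base hx => exact Λ.cstage_mono S (Nat.zero_le _) hx
  | @step x y hx hy hsr ih =>
    by_cases hdx : Λ.d x = 0
    · have hxr : x = Λ.r y := by rw [← Λ.s_vertex x hdx]; exact hsr
      have hcy : Λ.comp x y = y := by rw [hxr, Λ.id_comp y]
      rw [hcy]
      exact ih
    · have h1 : Λ.comp x y ∈ Λ.cstage S (Λ.len y + 1) :=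
        Or.inr ⟨x, hx, y, ih, hsr, rfl⟩
      have h2 : Λ.len y + 1 ≤ Λ.len (Λ.comp x y) := by
        rw [Λ.len_comp hsr]
        have := Λ.len_pos hdx
        omega
      exact Λ.cstage_mono S h2 h1

lemma compMem_finite (hfin : {v : Λ.Path | Λ.IsVertex v}.Finite) (hnc : Λ.NoCycles)
    {S : Set Λ.Path} (hS : S.Finite) : {z | Λ.CompMem S z}.Finite := by
  refine Set.Finite.subset (Λ.cstage_finite hS hfin.toFinset.card) ?_
  intro z hz
  have h1 := Λ.compMem_cstage hz
  have h2 : Λ.len z ≤ hfin.toFinset.card := le_of_lt (Λ.len_lt hfin hnc z)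
  exact Λ.cstage_mono S h2 h1

lemma compMem_set_mono {S S' : Set Λ.Path} (h : S ⊆ S') :
    {z | Λ.CompMem S z} ⊆ {z | Λ.CompMem S' z} := fun _ hz => Λ.compMem_mono h hz

end KGraph

namespace KGraph

variable {k : ℕ} (Λ : KGraph k)

lemma T_core {b e c lam : Λ.Path} (hbe : Λ.s b = Λ.r e)
    (hlam : lam ∈ Λ.MCE (Λ.comp b e) c) :
    ∃ γ δ β₁ : Λ.Path,
      Λ.IsTail b c γ ∧
      Λ.IsTail c b β₁ ∧
      Λ.IsTail γ e δ ∧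
      (∀ a, Λ.s e = Λ.r a → Λ.comp (Λ.comp b e) a = lam → Λ.IsTail e γ a) ∧
      (∀ β, Λ.s c = Λ.r β → Λ.comp c β = lam → β = Λ.comp β₁ δ) ∧
      Λ.s β₁ = Λ.r δ ∧
      Λ.d γ = (Λ.d b ⊔ Λ.d c) - Λ.d b := by
  obtain ⟨hd, ⟨a0, ha0r, ha0⟩, ⟨β0, hβ0r, hβ0⟩⟩ := hlam
  have dbe : Λ.d (Λ.comp b e) = Λ.d b + Λ.d e := Λ.d_comp b e hbe
  have hse : Λ.s (Λ.comp b e) = Λ.s e := Λ.s_comp b e hbe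
  have hsea0 : Λ.s e = Λ.r a0 := by rw [← hse]; exact ha0r
  have hbnu : Λ.comp b (Λ.comp e a0) = lam := by
    rw [← Λ.comp_assoc b e a0 hbe hsea0]; exact ha0
  have hsb_rnu : Λ.s b = Λ.r (Λ.comp e a0) := by
    rw [Λ.r_comp e a0 hsea0]; exact hbe
  have dlam_b : Λ.d lam = Λ.d b + Λ.d (Λ.comp e a0) := by
    rw [← hbnu]; exact Λ.d_comp b _ hsb_rnu
  set D := Λ.d b ⊔ Λ.d c with hD
  have hDle : ∀ i, D i ≤ Λ.d lam i := by
    intro i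
    have hDi : D i = max (Λ.d b i) (Λ.d c i) := by rw [hD]; simp [Pi.sup_apply]
    have h1 := congrFun hd i
    have h2 := congrFun dbe i
    simp only [Pi.sup_apply, Pi.add_apply] at h1 h2
    omega
  have hdbD : ∀ i, Λ.d b i ≤ D i := by
    intro i; simp only [hD, Pi.sup_apply]; exact le_max_left _ _
  have hdnu_sum : Λ.d (Λ.comp e a0) = (D - Λ.d b) + (Λ.d (Λ.comp e a0) - (D - Λ.d b)) := by
    funext i
    have h1 := hDle i
    have h2 := congrFun dlam_b i
    have h3 := hdbD i
    simp only [Pi.add_apply, Pi.sub_apply] at *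
    omega
  obtain ⟨γ, δ, dγ, dδ, hγδ, hγδc⟩ := Λ.split (Λ.comp e a0) hdnu_sum
  have hrγ : Λ.r γ = Λ.r (Λ.comp e a0) := by
    rw [← hγδc]; exact (Λ.r_comp γ δ hγδ).symm
  have hsbγ : Λ.s b = Λ.r γ := by rw [hrγ]; exact hsb_rnu
  have hL1c : Λ.comp (Λ.comp b γ) δ = lam := by
    rw [Λ.comp_assoc b γ δ hsbγ hγδ, hγδc]; exact hbnu
  have dL1 : Λ.d (Λ.comp b γ) = D := by
    rw [Λ.d_comp b γ hsbγ, dγ]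
    funext i
    have h1 := hdbD i
    simp only [Pi.add_apply, Pi.sub_apply]
    omega
  have hsL1 : Λ.s (Λ.comp b γ) = Λ.r δ := by
    rw [Λ.s_comp b γ hsbγ]; exact hγδ
  -- the `c` side
  have dβ0 : Λ.d lam = Λ.d c + Λ.d β0 := by
    rw [← hβ0]; exact Λ.d_comp c β0 hβ0r
  have hdcD : ∀ i, Λ.d c i ≤ D i := by
    intro i; simp only [hD, Pi.sup_apply]; exact le_max_right _ _
  have hdβ0_sum : Λ.d β0 = (D - Λ.d c) + (Λ.d β0 - (D - Λ.d c)) := by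
    funext i
    have h1 := hDle i
    have h2 := congrFun dβ0 i
    have h3 := hdcD i
    simp only [Pi.add_apply, Pi.sub_apply] at *
    omega
  obtain ⟨β₁, δ₂, dβ₁, dδ₂, hβ₁δ₂, hβ₁δ₂c⟩ := Λ.split β0 hdβ0_sum
  have hrβ₁ : Λ.r β0 = Λ.r β₁ := by
    rw [← hβ₁δ₂c]; exact Λ.r_comp β₁ δ₂ hβ₁δ₂
  have hscβ₁ : Λ.s c = Λ.r β₁ := by rw [← hrβ₁]; exact hβ0r
  have hL1'c : Λ.comp (Λ.comp c β₁) δ₂ = lam := by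
    rw [Λ.comp_assoc c β₁ δ₂ hscβ₁ hβ₁δ₂, hβ₁δ₂c]; exact hβ0
  have dL1' : Λ.d (Λ.comp c β₁) = D := by
    rw [Λ.d_comp c β₁ hscβ₁, dβ₁]
    funext i
    have h1 := hdcD i
    simp only [Pi.add_apply, Pi.sub_apply]
    omega
  have hsL1' : Λ.s (Λ.comp c β₁) = Λ.r δ₂ := by
    rw [Λ.s_comp c β₁ hscβ₁]; exact hβ₁δ₂
  -- uniqueness of the splitting at degree `D`
  have hDsum : Λ.d lam = D + (Λ.d lam - D) := by
    funext i
    have h1 := hDle i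
    simp only [Pi.add_apply, Pi.sub_apply]
    omega
  have dδeq : Λ.d δ = Λ.d lam - D := by
    rw [dδ]
    funext i
    have h1 := hDle i
    have h2 := congrFun dlam_b i
    have h3 := hdbD i
    simp only [Pi.sub_apply, Pi.add_apply] at *
    omega
  have dδ₂eq : Λ.d δ₂ = Λ.d lam - D := by
    rw [dδ₂]
    funext i
    have h1 := hDle i
    have h2 := congrFun dβ0 i
    have h3 := hdcD i
    simp only [Pi.sub_apply, Pi.add_apply] at *
    omega
  obtain ⟨hLeq, hδeq⟩ :=
    Λ.split_unique lam hDsum dL1 dδeq hsL1 hL1c dL1' dδ₂eq hsL1' hL1'c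
  -- MCE memberships
  have hL1MCE : Λ.comp b γ ∈ Λ.MCE b c :=
    ⟨by rw [dL1, hD], ⟨γ, hsbγ, rfl⟩, ⟨β₁, hscβ₁, hLeq.symm⟩⟩
  have dnu_eγ : Λ.d (Λ.comp e a0) = Λ.d e ⊔ Λ.d γ := by
    funext i
    have hDi : D i = max (Λ.d b i) (Λ.d c i) := by rw [hD]; simp [Pi.sup_apply]
    have h1 := congrFun hd i
    have h2 := congrFun dbe i
    have h3 := congrFun dlam_b i
    have h4 := congrFun dγ i
    simp only [Pi.sup_apply, Pi.add_apply, Pi.sub_apply] at h1 h2 h3 h4 ⊢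
    omega
  have hnuMCE : Λ.comp e a0 ∈ Λ.MCE e γ :=
    ⟨dnu_eγ, ⟨a0, hsea0, rfl⟩, ⟨δ, hγδ, hγδc⟩⟩
  refine ⟨γ, δ, β₁, ⟨hsbγ, hL1MCE⟩, ?_, ?_, ?_, ?_, ?_, ?_⟩
  · exact ⟨hscβ₁, by rw [Λ.mce_symm c b, ← hLeq]; exact hL1MCE⟩
  · exact ⟨hγδ, by rw [hγδc, Λ.mce_symm γ e]; exact hnuMCE⟩
  · intro a hsa hca
    have hsra : Λ.s (Λ.comp b e) = Λ.r a := by rw [hse]; exact hsa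
    have hd1 : Λ.d lam = Λ.d (Λ.comp b e) + Λ.d a := by
      rw [← hca]; exact Λ.d_comp _ a hsra
    have hd0 : Λ.d lam = Λ.d (Λ.comp b e) + Λ.d a0 := by
      rw [← ha0]; exact Λ.d_comp _ a0 ha0r
    have hda : Λ.d a = Λ.d a0 := by
      have := hd1.symm.trans hd0
      exact add_left_cancel this
    have := Λ.split_unique lam hd0 rfl hda hsra hca rfl rfl ha0r ha0
    rw [this.2]
    exact ⟨hsea0, hnuMCE⟩
  · intro β hsβ hcβ
    have hd1 : Λ.d lam = Λ.d c + Λ.d β := by rw [← hcβ]; exact Λ.d_comp c β hsβ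
    have hdβ : Λ.d β = Λ.d β0 := by
      have := hd1.symm.trans dβ0
      exact add_left_cancel this
    have := Λ.split_unique lam dβ0 rfl hdβ hsβ hcβ rfl rfl hβ0r hβ0
    rw [this.2, ← hβ₁δ₂c, hδeq]
  · rw [hδeq]; exact hβ₁δ₂
  · rw [dγ, hD]

lemma mcePairs_tail₁ {nu sg : Λ.Path} {p : Λ.Path × Λ.Path}
    (hp : p ∈ Λ.MCEPairs nu sg) : Λ.IsTail nu sg p.1 :=
  ⟨hp.1, hp.2.2.2⟩

lemma mcePairs_tail₂ {nu sg : Λ.Path} {p : Λ.Path × Λ.Path}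
    (hp : p ∈ Λ.MCEPairs nu sg) : Λ.IsTail sg nu p.2 := by
  refine ⟨hp.2.1, ?_⟩
  rw [← hp.2.2.1, Λ.mce_symm sg nu]
  exact hp.2.2.2

lemma mcePairs_finite (hFA : Λ.FinitelyAligned) (nu sg : Λ.Path) :
    (Λ.MCEPairs nu sg).Finite := by
  have himg : (fun p : Λ.Path × Λ.Path => Λ.comp nu p.1) '' Λ.MCEPairs nu sg ⊆
      Λ.MCE nu sg := by
    rintro - ⟨p, hp, rfl⟩
    exact hp.2.2.2
  refine Set.Finite.of_finite_image ((hFA nu sg).subset himg) ?_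
  rintro p hp q hq heq
  have heq' : Λ.comp nu p.1 = Λ.comp nu q.1 := heq
  have h1 : p.1 = q.1 := Λ.comp_right_cancel hp.1 hq.1 heq'
  have h2 : p.2 = q.2 := by
    refine Λ.comp_right_cancel hp.2.1 hq.2.1 ?_
    rw [← hp.2.2.1, ← hq.2.2.1, heq']
  exact Prod.ext h1 h2

/-- Main closure lemma: tails of pairs of composites are composites. -/
lemma tail_compMem {Y : Set Λ.Path} (hY : Λ.TailsOf Y ⊆ Y) :
    ∀ n, ∀ x c a : Λ.Path, Λ.CompMem Y x → Λ.CompMem Y c →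
      Λ.len x + Λ.len c ≤ n → Λ.IsTail x c a → Λ.CompMem Y a := by
  intro n
  induction n using Nat.strong_induction_on with
  | _ n IH =>
  intro x c a hx hc hlen hta
  rcases Λ.compMem_cases hx with hxY | ⟨b, e, hbY, hdb, hce, hde, hbe, rfl⟩
  · rcases Λ.compMem_cases hc with hcY | ⟨b, e, hbY, hdb, hce, hde, hbe, rfl⟩
    · exact CompMem.base (hY ⟨x, hxY, c, hcY, hta⟩)
    · -- case 1 : x is a generator, c = comp b e
      obtain ⟨hsxa, hxaMCE⟩ := hta
      have hlamMCE : Λ.comp x a ∈ Λ.MCE (Λ.comp b e) x := by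
        rw [← Λ.mce_symm]; exact hxaMCE
      obtain ⟨γ, δ, β₁, h1, h2, h3, h4, h5, h6, h7⟩ := Λ.T_core hbe hlamMCE
      have ha := h5 a hsxa rfl
      have hlenc : Λ.len (Λ.comp b e) = Λ.len b + Λ.len e := Λ.len_comp hbe
      have hlb := Λ.len_pos hdb
      have hle := Λ.len_pos hde
      have hγx : Λ.len γ ≤ Λ.len x := by
        refine Finset.sum_le_sum ?_
        intro i _
        have h8 := congrFun h7 i
        simp only [Pi.sup_apply, Pi.sub_apply] at h8
        omega
      have hβ₁mem : Λ.CompMem Y β₁ :=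
        IH (Λ.len x + Λ.len b) (by omega) x b β₁ hx (CompMem.base hbY) le_rfl h2
      have hγmem : Λ.CompMem Y γ :=
        IH (Λ.len b + Λ.len x) (by omega) b x γ (CompMem.base hbY) hx le_rfl h1
      have hδmem : Λ.CompMem Y δ :=
        IH (Λ.len γ + Λ.len e) (by omega) γ e δ hγmem hce le_rfl h3
      rw [ha]
      exact Λ.compMem_comp hβ₁mem hδmem h6
  · -- case 2 : x = comp b e
    obtain ⟨hsxa, hxaMCE⟩ := hta
    have hsea : Λ.s e = Λ.r a := by rw [← Λ.s_comp b e hbe]; exact hsxa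
    obtain ⟨γ, δ, β₁, h1, h2, h3, h4, h5, h6, h7⟩ := Λ.T_core hbe hxaMCE
    have h4a := h4 a hsea rfl
    have hlenc : Λ.len (Λ.comp b e) = Λ.len b + Λ.len e := Λ.len_comp hbe
    have hlb := Λ.len_pos hdb
    have hle := Λ.len_pos hde
    have hγc : Λ.len γ ≤ Λ.len c := by
      refine Finset.sum_le_sum ?_
      intro i _
      have h8 := congrFun h7 i
      simp only [Pi.sup_apply, Pi.sub_apply] at h8
      omega
    have hγmem : Λ.CompMem Y γ :=
      IH (Λ.len b + Λ.len c) (by omega) b c γ (CompMem.base hbY) hc le_rfl h1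
    exact IH (Λ.len e + Λ.len γ) (by omega) e γ a hce hγmem le_rfl h4a

end KGraph

namespace CKFamilyAF

open KGraph

variable {k : ℕ} {Λ : KGraph k} {B : Type*} [NonUnitalCStarAlgebra B]

/-- Generators attached to an index set of paths. -/
def genSet (f : CKFamily Λ B) (F : Set Λ.Path) : Set B :=
  {z | ∃ mu nu, mu ∈ F ∧ nu ∈ F ∧ Λ.s mu = Λ.s nu ∧ z = f.t mu * star (f.t nu)}

lemma genSet_mono (f : CKFamily Λ B) {F F' : Set Λ.Path} (h : F ⊆ F') :
    genSet f F ⊆ genSet f F' := by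
  rintro z ⟨mu, nu, h1, h2, h3, rfl⟩
  exact ⟨mu, nu, h h1, h h2, h3, rfl⟩

lemma genSet_finite (f : CKFamily Λ B) {F : Set Λ.Path} (hF : F.Finite) :
    (genSet f F).Finite := by
  refine Set.Finite.subset ((hF.prod hF).image
    (fun p : Λ.Path × Λ.Path => f.t p.1 * star (f.t p.2))) ?_
  rintro z ⟨mu, nu, h1, h2, -, rfl⟩
  exact ⟨(mu, nu), ⟨h1, h2⟩, rfl⟩

lemma genSet_star (f : CKFamily Λ B) {F : Set Λ.Path} {z : B} (hz : z ∈ genSet f F) :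
    star z ∈ genSet f F := by
  obtain ⟨mu, nu, h1, h2, h3, rfl⟩ := hz
  exact ⟨nu, mu, h2, h1, h3.symm, by rw [star_mul, star_star]⟩

/-- The product of two generators indexed by a tail-closed set of composites lies in the span
of the generators. -/
lemma gen_mul_mem (f : CKFamily Λ B) (hFA : Λ.FinitelyAligned)
    {Y : Set Λ.Path} (hY : Λ.TailsOf Y ⊆ Y) :
    ∀ a ∈ genSet f {z | Λ.CompMem Y z}, ∀ b ∈ genSet f {z | Λ.CompMem Y z},
      a * b ∈ Submodule.span ℂ (genSet f {z | Λ.CompMem Y z}) := by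
  rintro - ⟨mu, nu, hmu, hnu, hsmn, rfl⟩ - ⟨sg, tau, hsg, htau, hsst, rfl⟩
  have hfinP := Λ.mcePairs_finite hFA nu sg
  have step1 : star (f.t nu) * f.t sg
      = ∑ p ∈ hfinP.toFinset, f.t p.1 * star (f.t p.2) := by
    have h0 := finsum_mem_coe_finset
      (fun p : Λ.Path × Λ.Path => f.t p.1 * star (f.t p.2)) hfinP.toFinset
    rw [Set.Finite.coe_toFinset] at h0
    exact (f.ck3 nu sg).trans h0
  have rearr : (f.t mu * star (f.t nu)) * (f.t sg * star (f.t tau))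
      = f.t mu * ((star (f.t nu) * f.t sg) * star (f.t tau)) := by
    rw [mul_assoc (f.t mu) (star (f.t nu)) _, ← mul_assoc (star (f.t nu)) (f.t sg) _]
  rw [rearr, step1, Finset.sum_mul, Finset.mul_sum]
  refine Submodule.sum_mem _ ?_
  intro p hp
  rw [Set.Finite.mem_toFinset] at hp
  have h1 : Λ.IsTail nu sg p.1 := Λ.mcePairs_tail₁ hp
  have h2 : Λ.IsTail sg nu p.2 := Λ.mcePairs_tail₂ hp
  have hα : Λ.CompMem Y p.1 :=
    Λ.tail_compMem hY (Λ.len nu + Λ.len sg) nu sg p.1 hnu hsg le_rfl h1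
  have hβ : Λ.CompMem Y p.2 :=
    Λ.tail_compMem hY (Λ.len sg + Λ.len nu) sg nu p.2 hsg hnu le_rfl h2
  have hsμα : Λ.s mu = Λ.r p.1 := hsmn.trans h1.1
  have hsτβ : Λ.s tau = Λ.r p.2 := hsst.symm.trans h2.1
  have hterm : f.t mu * ((f.t p.1 * star (f.t p.2)) * star (f.t tau))
      = f.t (Λ.comp mu p.1) * star (f.t (Λ.comp tau p.2)) := by
    rw [mul_assoc (f.t p.1) (star (f.t p.2)) (star (f.t tau)),
      ← star_mul (f.t tau) (f.t p.2), ← mul_assoc (f.t mu) (f.t p.1) _,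
      f.mul_eq mu p.1 hsμα, f.mul_eq tau p.2 hsτβ]
  have hsrc : Λ.s (Λ.comp mu p.1) = Λ.s (Λ.comp tau p.2) := by
    rw [Λ.s_comp mu p.1 hsμα, Λ.s_comp tau p.2 hsτβ]
    have e1 : Λ.s (Λ.comp nu p.1) = Λ.s p.1 := Λ.s_comp nu p.1 h1.1
    have e2 : Λ.s (Λ.comp sg p.2) = Λ.s p.2 := Λ.s_comp sg p.2 h2.1
    rw [← e1, ← e2, hp.2.2.1]
  have hgen : f.t (Λ.comp mu p.1) * star (f.t (Λ.comp tau p.2))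
      ∈ genSet f {z | Λ.CompMem Y z} :=
    ⟨Λ.comp mu p.1, Λ.comp tau p.2,
      Λ.compMem_comp hmu hα hsμα, Λ.compMem_comp htau hβ hsτβ, hsrc, rfl⟩
  rw [hterm]
  exact Submodule.subset_span hgen

/-- Package a star- and multiplication-closed span as a non-unital star subalgebra. -/
def spanAlg (G : Set B) (hmul : ∀ a ∈ G, ∀ b ∈ G, a * b ∈ Submodule.span ℂ G)
    (hstar : ∀ a ∈ G, star a ∈ G) : NonUnitalStarSubalgebra ℂ B :=
  { Submodule.toNonUnitalSubalgebra (Submodule.span ℂ G)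
      (by
        intro x y hx hy
        induction hx using Submodule.span_induction with
        | mem a ha =>
          induction hy using Submodule.span_induction with
          | mem b hb => exact hmul a ha b hb
          | zero => rw [mul_zero]; exact Submodule.zero_mem _
          | add b c _ _ ihb ihc => rw [mul_add]; exact Submodule.add_mem _ ihb ihc
          | smul r b _ ihb => rw [mul_smul_comm]; exact Submodule.smul_mem _ _ ihb
        | zero => rw [zero_mul]; exact Submodule.zero_mem _
        | add a b _ _ iha ihb => rw [add_mul]; exact Submodule.add_mem _ iha ihb
        | smul r a _ iha => rw [smul_mul_assoc]; exact Submodule.smul_mem _ _ iha) with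
    star_mem' := by
      intro x hx
      induction hx using Submodule.span_induction with
      | mem a ha => exact Submodule.subset_span (hstar a ha)
      | zero => simpa using Submodule.zero_mem (Submodule.span ℂ G)
      | add a b _ _ ha hb => rw [star_add]; exact Submodule.add_mem _ ha hb
      | smul c a _ ha => rw [star_smul]; exact Submodule.smul_mem _ _ ha }

lemma mem_spanAlg_iff {G : Set B} {hmul} {hstar} {x : B} :
    x ∈ spanAlg G hmul hstar ↔ x ∈ Submodule.span ℂ G := Iff.rfl

end CKFamilyAF

theorem stmt1_aux {k : ℕ} (Λ : KGraph k) (hFA : Λ.FinitelyAligned)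
    (hfin : {v : Λ.Path | Λ.IsVertex v}.Finite) (hnc : Λ.NoCycles)
    (B : Type*) [NonUnitalCStarAlgebra B] (f : CKFamily Λ B) :
    IsAFIn B ((NonUnitalStarAlgebra.adjoin ℂ (Set.range f.t)).topologicalClosure : Set B) := by
  classical
  have hcount : Countable Λ.Path := Λ.countable
  obtain ⟨enc, henc⟩ := exists_injective_nat Λ.Path
  set N := hfin.toFinset.card with hN
  set E : ℕ → Set Λ.Path := fun n => enc ⁻¹' Set.Iio n with hE
  have hEfin : ∀ n, (E n).Finite := fun n => (Set.finite_Iio n).preimage henc.injOn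
  have hEmono : ∀ {n m : ℕ}, n ≤ m → E n ⊆ E m := by
    intro n m hnm p hp
    exact lt_of_lt_of_le hp hnm
  set Y : ℕ → Set Λ.Path := fun n => Λ.stage (E n) N with hY
  have hYfin : ∀ n, (Y n).Finite := fun n => Λ.stage_finite hFA (hEfin n) N
  have hYtails : ∀ n, Λ.TailsOf (Y n) ⊆ Y n := fun n => Λ.stage_stab hfin hnc (E n)
  set F : ℕ → Set Λ.Path := fun n => {z | Λ.CompMem (Y n) z} with hF
  have hFfin : ∀ n, (F n).Finite := fun n => Λ.compMem_finite hfin hnc (hYfin n)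
  have hFmono : ∀ {n m : ℕ}, n ≤ m → F n ⊆ F m := fun hnm =>
    Λ.compMem_set_mono (Λ.stage_mono_E (hEmono hnm) N)
  set G : ℕ → Set B := fun n => CKFamilyAF.genSet f (F n) with hG
  set T : ℕ → NonUnitalStarSubalgebra ℂ B := fun n =>
    CKFamilyAF.spanAlg (G n)
      (CKFamilyAF.gen_mul_mem f hFA (hYtails n))
      (fun a ha => CKFamilyAF.genSet_star f ha) with hT
  have hmemT : ∀ n (x : B), x ∈ T n ↔ x ∈ Submodule.span ℂ (G n) := fun n x => Iff.rfl
  have hTmono : Monotone T := by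
    intro n m hnm x hx
    rw [hmemT] at hx ⊢
    exact Submodule.span_mono (CKFamilyAF.genSet_mono f (hFmono hnm)) hx
  -- each `t lam` is a generator
  have htgen : ∀ (n : ℕ) (lam : Λ.Path), lam ∈ E n → f.t lam ∈ G n := by
    intro n lam hlam
    have hlamY : lam ∈ Y n := Λ.stage_mono (E n) (Nat.zero_le N) (Or.inl hlam)
    have hslamY : Λ.s lam ∈ Y n :=
      Λ.stage_mono (E n) (Nat.zero_le N) (Or.inr ⟨lam, hlam, rfl⟩)
    have hsv : Λ.IsVertex (Λ.s lam) := Λ.d_s lam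
    have hss : Λ.s lam = Λ.s (Λ.s lam) := (Λ.s_vertex (Λ.s lam) hsv).symm
    refine ⟨lam, Λ.s lam, KGraph.CompMem.base hlamY, KGraph.CompMem.base hslamY, hss, ?_⟩
    rw [f.selfadjoint (Λ.s lam) hsv, f.mul_eq lam (Λ.s lam)
      (Λ.r_vertex (Λ.s lam) hsv).symm, Λ.comp_id lam]
  refine ⟨T, hTmono, ?_, ?_, ?_⟩
  · -- T n ⊆ closure of adjoin
    intro n x hx
    have hGS : G n ⊆ (((NonUnitalStarAlgebra.adjoin ℂ
        (Set.range f.t)).topologicalClosure : NonUnitalStarSubalgebra ℂ B) : Set B) := by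
      rintro - ⟨mu, nu, -, -, -, rfl⟩
      have h1 : f.t mu ∈ NonUnitalStarAlgebra.adjoin ℂ (Set.range f.t) :=
        NonUnitalStarAlgebra.subset_adjoin ℂ _ ⟨mu, rfl⟩
      have h2 : f.t nu ∈ NonUnitalStarAlgebra.adjoin ℂ (Set.range f.t) :=
        NonUnitalStarAlgebra.subset_adjoin ℂ _ ⟨nu, rfl⟩
      exact (NonUnitalStarAlgebra.adjoin ℂ (Set.range f.t)).le_topologicalClosure
        (mul_mem h1 (star_mem h2))
    have hle : Submodule.span ℂ (G n) ≤
        ((NonUnitalStarAlgebra.adjoin ℂ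
        (Set.range f.t)).topologicalClosure).toNonUnitalSubalgebra.toSubmodule :=
      Submodule.span_le.mpr hGS
    exact hle hx
  · -- finite dimensionality
    intro n
    exact Module.Finite.span_of_finite ℂ (CKFamilyAF.genSet_finite f (hFfin n))
  · -- density
    intro x hx
    have hsub : ((NonUnitalStarAlgebra.adjoin ℂ (Set.range f.t) :
        NonUnitalStarSubalgebra ℂ B) : Set B) ⊆ ⋃ n, (T n : Set B) := by
      intro y hy
      induction hy using NonUnitalStarAlgebra.adjoin_induction with
      | mem z hz =>
        obtain ⟨lam, rfl⟩ := hz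
        refine Set.mem_iUnion.mpr ⟨enc lam + 1, ?_⟩
        have : f.t lam ∈ G (enc lam + 1) := htgen _ lam (Nat.lt_succ_self _)
        exact Submodule.subset_span this
      | add a b _ _ ha hb =>
        obtain ⟨n, hn⟩ := Set.mem_iUnion.mp ha
        obtain ⟨m, hm⟩ := Set.mem_iUnion.mp hb
        refine Set.mem_iUnion.mpr ⟨max n m, ?_⟩
        exact add_mem (hTmono (le_max_left n m) hn) (hTmono (le_max_right n m) hm)
      | zero => exact Set.mem_iUnion.mpr ⟨0, zero_mem _⟩
      | mul a b _ _ ha hb =>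
        obtain ⟨n, hn⟩ := Set.mem_iUnion.mp ha
        obtain ⟨m, hm⟩ := Set.mem_iUnion.mp hb
        refine Set.mem_iUnion.mpr ⟨max n m, ?_⟩
        exact mul_mem (hTmono (le_max_left n m) hn) (hTmono (le_max_right n m) hm)
      | smul r a _ ha =>
        obtain ⟨n, hn⟩ := Set.mem_iUnion.mp ha
        exact Set.mem_iUnion.mpr ⟨n, SMulMemClass.smul_mem r hn⟩
      | star a _ ha =>
        obtain ⟨n, hn⟩ := Set.mem_iUnion.mp ha
        exact Set.mem_iUnion.mpr ⟨n, star_mem hn⟩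
    have hxc : x ∈ closure ((NonUnitalStarAlgebra.adjoin ℂ (Set.range f.t) :
        NonUnitalStarSubalgebra ℂ B) : Set B) := hx
    exact closure_mono hsub hxc
/-- If `Λ` is a finitely aligned `k`-graph with finitely many vertices and
no cycles, then the C*-subalgebra of `B` generated by any Cuntz–Krieger `Λ`-family is AF. -/
theorem stmt1 {k : ℕ} (Λ : KGraph k) (hFA : Λ.FinitelyAligned)
    (hfin : {v : Λ.Path | Λ.IsVertex v}.Finite) (hnc : Λ.NoCycles)
    (B : Type*) [NonUnitalCStarAlgebra B] (f : CKFamily Λ B) :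
    IsAFIn B ((NonUnitalStarAlgebra.adjoin ℂ (Set.range f.t)).topologicalClosure : Set B) := by
  exact stmt1_aux Λ hFA hfin hnc B f
end

section
/- Let Λ be a finitely aligned k-graph, let (μ, ν) be a generalised cycle in Λ with an entrance τ, and let {t_λ : λ ∈ Λ} be a Cuntz–Krieger Λ-family in a C*-algebra B with t_{s(τ)} ≠ 0. Then t_ν t_ν* is an infinite projection: the element w := t_ν t_μ* is a partial isometry with w*w = t_μ t_μ* and ww* = t_ν t_ν*, and t_μ t_μ* ≤ t_ν t_ν* with t_μ t_μ* ≠ t_ν t_ν* (indeed t_ν t_ν* − t_μ t_μ* ≥ t_{ντ} t_{ντ}* > 0). -/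
open scoped ComplexOrder ENat

section Aux

namespace KGraph

variable {k : ℕ} (Λ : KGraph k)

lemma cancel_left {mu a b : Λ.Path} (ha : Λ.s mu = Λ.r a) (hb : Λ.s mu = Λ.r b)
    (hd : Λ.d a = Λ.d b) (h : Λ.comp mu a = Λ.comp mu b) : a = b := by
  obtain ⟨p, _, hu⟩ := Λ.factor (Λ.comp mu a) (Λ.d mu) (Λ.d a) (Λ.d_comp mu a ha)
  have h1 := hu (mu, a) ⟨rfl, rfl, ha, rfl⟩
  have h2 := hu (mu, b) ⟨rfl, hd.symm, hb, h.symm⟩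
  exact congrArg Prod.snd (h1.trans h2.symm)

lemma MCE_comm (a b : Λ.Path) : Λ.MCE a b = Λ.MCE b a := by
  have hsup : Λ.d a ⊔ Λ.d b = Λ.d b ⊔ Λ.d a := sup_comm _ _
  ext lam
  simp only [MCE, Set.mem_setOf_eq, hsup]
  tauto

lemma MCE_of_ne_same_deg {a b : Λ.Path} (hd : Λ.d a = Λ.d b) (hne : a ≠ b) :
    Λ.MCE a b = ∅ := by
  ext lam
  simp only [Set.mem_empty_iff_false, iff_false]
  rintro ⟨hdl, ⟨α, hα1, hα2⟩, ⟨β, hβ1, hβ2⟩⟩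
  have hda : Λ.d lam = Λ.d a := by
    rw [hdl, ← hd, sup_idem]
  have hdα : Λ.d α = 0 := by
    have h1 := Λ.d_comp a α hα1
    rw [hα2, hda] at h1
    funext i
    have := congrFun h1 i
    simp only [Pi.add_apply, Pi.zero_apply] at *
    omega
  have hdβ : Λ.d β = 0 := by
    have h1 := Λ.d_comp b β hβ1
    rw [hβ2, hda, hd] at h1
    funext i
    have := congrFun h1 i
    simp only [Pi.add_apply, Pi.zero_apply] at *
    omega
  have hα : α = Λ.s a := by rw [hα1, Λ.r_vertex α hdα]
  have hβ : β = Λ.s b := by rw [hβ1, Λ.r_vertex β hdβ]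
  subst hα hβ
  rw [Λ.comp_id] at hα2 hβ2
  exact hne (hα2.trans hβ2.symm)

/-- Restriction of a common extension to a minimal common extension. -/
lemma restrict {mu nu g e : Λ.Path} (h1 : Λ.s mu = Λ.r g) (h2 : Λ.s nu = Λ.r e)
    (h : Λ.comp mu g = Λ.comp nu e) :
    ∃ a b, Λ.s mu = Λ.r a ∧ Λ.s nu = Λ.r b ∧ Λ.comp mu a = Λ.comp nu b ∧
      Λ.comp mu a ∈ Λ.MCE mu nu ∧ ∃ ρ, Λ.s a = Λ.r ρ ∧ Λ.comp a ρ = g := by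
  have hdl1 : Λ.d (Λ.comp mu g) = Λ.d mu + Λ.d g := Λ.d_comp mu g h1
  have hdl2 : Λ.d (Λ.comp mu g) = Λ.d nu + Λ.d e := by
    rw [h]; exact Λ.d_comp nu e h2
  have hmle : ∀ i, (Λ.d mu ⊔ Λ.d nu) i ≤ Λ.d (Λ.comp mu g) i := by
    intro i
    have e1 := congrFun hdl1 i
    have e2 := congrFun hdl2 i
    simp only [Pi.add_apply] at e1 e2
    simp only [Pi.sup_apply, sup_le_iff]
    omega
  have hg : Λ.d g = ((Λ.d mu ⊔ Λ.d nu) - Λ.d mu) + (Λ.d (Λ.comp mu g) - (Λ.d mu ⊔ Λ.d nu)) := by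
    funext i
    have e1 := congrFun hdl1 i
    have := hmle i
    simp only [Pi.add_apply, Pi.sub_apply, Pi.sup_apply] at *
    omega
  have he : Λ.d e = ((Λ.d mu ⊔ Λ.d nu) - Λ.d nu) + (Λ.d (Λ.comp mu g) - (Λ.d mu ⊔ Λ.d nu)) := by
    funext i
    have e2 := congrFun hdl2 i
    have := hmle i
    simp only [Pi.add_apply, Pi.sub_apply, Pi.sup_apply] at *
    omega
  obtain ⟨⟨g1, g2⟩, ⟨hdg1, hdg2, hsg, hcg⟩, -⟩ :=
    Λ.factor g ((Λ.d mu ⊔ Λ.d nu) - Λ.d mu) (Λ.d (Λ.comp mu g) - (Λ.d mu ⊔ Λ.d nu)) hg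
  obtain ⟨⟨e1, e2⟩, ⟨hde1, hde2, hse, hce⟩, -⟩ :=
    Λ.factor e ((Λ.d mu ⊔ Λ.d nu) - Λ.d nu) (Λ.d (Λ.comp mu g) - (Λ.d mu ⊔ Λ.d nu)) he
  have hrg1 : Λ.s mu = Λ.r g1 := by
    rw [h1, ← hcg, Λ.r_comp g1 g2 hsg]
  have hre1 : Λ.s nu = Λ.r e1 := by
    rw [h2, ← hce, Λ.r_comp e1 e2 hse]
  have hdmug1 : Λ.d (Λ.comp mu g1) = Λ.d mu ⊔ Λ.d nu := by
    rw [Λ.d_comp mu g1 hrg1, hdg1]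
    funext i
    have := hmle i
    simp only [Pi.add_apply, Pi.sub_apply, Pi.sup_apply] at *
    omega
  have hdnue1 : Λ.d (Λ.comp nu e1) = Λ.d mu ⊔ Λ.d nu := by
    rw [Λ.d_comp nu e1 hre1, hde1]
    funext i
    have := hmle i
    simp only [Pi.add_apply, Pi.sub_apply, Pi.sup_apply] at *
    omega
  have hfac : Λ.d (Λ.comp mu g) = (Λ.d mu ⊔ Λ.d nu) + (Λ.d (Λ.comp mu g) - (Λ.d mu ⊔ Λ.d nu)) := by
    funext i
    have := hmle i
    simp only [Pi.add_apply, Pi.sub_apply] at *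
    omega
  obtain ⟨p, -, hu⟩ :=
    Λ.factor (Λ.comp mu g) (Λ.d mu ⊔ Λ.d nu) (Λ.d (Λ.comp mu g) - (Λ.d mu ⊔ Λ.d nu)) hfac
  have hA : (Λ.comp mu g1, g2) = p := by
    refine hu _ ⟨hdmug1, hdg2, ?_, ?_⟩
    · rw [Λ.s_comp mu g1 hrg1]; exact hsg
    · rw [Λ.comp_assoc mu g1 g2 hrg1 hsg, hcg]
  have hB : (Λ.comp nu e1, e2) = p := by
    refine hu _ ⟨hdnue1, hde2, ?_, ?_⟩
    · rw [Λ.s_comp nu e1 hre1]; exact hse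
    · rw [Λ.comp_assoc nu e1 e2 hre1 hse, hce, ← h]
  have hkey : Λ.comp mu g1 = Λ.comp nu e1 :=
    congrArg Prod.fst (hA.trans hB.symm)
  exact ⟨g1, e1, hrg1, hre1, hkey, ⟨hdmug1, ⟨g1, hrg1, rfl⟩, ⟨e1, hre1, hkey.symm⟩⟩,
    g2, hsg, hcg⟩

end KGraph

section CKLemmas

variable {k : ℕ} {Λ : KGraph k} {B : Type*} [NonUnitalRing B] [StarRing B]
  (f : CKFamily Λ B)

lemma CKFamily.star_self (lam : Λ.Path) :
    star (f.t lam) * f.t lam = f.t (Λ.s lam) := by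
  rw [f.ck3]
  have hv : Λ.IsVertex (Λ.s lam) := Λ.d_s lam
  have hrv : Λ.s lam = Λ.r (Λ.s lam) := (Λ.r_vertex _ hv).symm
  have hset : Λ.MCEPairs lam lam = {(Λ.s lam, Λ.s lam)} := by
    ext ⟨α, β⟩
    simp only [KGraph.MCEPairs, Set.mem_setOf_eq, Set.mem_singleton_iff, Prod.mk.injEq]
    constructor
    · rintro ⟨h1, h2, h3, hd, -, -⟩
      have hdα : Λ.d α = 0 := by
        have hh := Λ.d_comp lam α h1
        rw [hd, sup_idem] at hh
        funext i
        have := congrFun hh i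
        simp only [Pi.add_apply, Pi.zero_apply] at *
        omega
      have hdβ : Λ.d β = 0 := by
        have hh := Λ.d_comp lam β h2
        rw [← h3, hd, sup_idem] at hh
        funext i
        have := congrFun hh i
        simp only [Pi.add_apply, Pi.zero_apply] at *
        omega
      constructor
      · rw [h1, Λ.r_vertex α hdα]
      · rw [h2, Λ.r_vertex β hdβ]
    · rintro ⟨rfl, rfl⟩
      refine ⟨hrv, hrv, rfl, ?_⟩
      rw [Λ.comp_id]
      exact ⟨(sup_idem _).symm, ⟨Λ.s lam, hrv, Λ.comp_id lam⟩, ⟨Λ.s lam, hrv, Λ.comp_id lam⟩⟩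
  rw [hset, finsum_mem_singleton, f.selfadjoint _ hv, f.idem _ hv]

lemma CKFamily.r_mul (lam : Λ.Path) : f.t (Λ.r lam) * f.t lam = f.t lam := by
  rw [f.mul_eq _ _ (Λ.s_vertex _ (Λ.d_r lam)), Λ.id_comp]

lemma CKFamily.mul_s (lam : Λ.Path) : f.t lam * f.t (Λ.s lam) = f.t lam := by
  rw [f.mul_eq _ _ (Λ.r_vertex _ (Λ.d_s lam)).symm, Λ.comp_id]

lemma CKFamily.p_selfadj (lam : Λ.Path) :
    star (f.t lam * star (f.t lam)) = f.t lam * star (f.t lam) := by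
  rw [star_mul, star_star]

lemma CKFamily.pp (lam : Λ.Path) :
    (f.t lam * star (f.t lam)) * (f.t lam * star (f.t lam)) = f.t lam * star (f.t lam) := by
  rw [mul_assoc, ← mul_assoc (star (f.t lam)), f.star_self lam]
  have h : f.t (Λ.s lam) * star (f.t lam) = star (f.t lam) := by
    have := congrArg star (f.mul_s lam)
    rwa [star_mul, f.selfadjoint _ (Λ.d_s lam)] at this
  rw [h]

lemma CKFamily.star_mul_of_MCE_empty {a b : Λ.Path} (h : Λ.MCE a b = ∅) :
    star (f.t a) * f.t b = 0 := by
  rw [f.ck3]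
  have : Λ.MCEPairs a b = ∅ := by
    ext p
    simp only [KGraph.MCEPairs, Set.mem_setOf_eq, Set.mem_empty_iff_false, iff_false]
    rintro ⟨-, -, -, hm⟩
    rw [h] at hm
    exact hm
  rw [this, finsum_mem_empty]

lemma proj_sub_proj {B : Type*} [NonUnitalRing B] {p q : B} (hp : p * p = p)
    (hq : q * q = q) (hpq : p * q = q) (hqp : q * p = q) :
    (p - q) * (p - q) = p - q := by
  rw [sub_mul, mul_sub, mul_sub, hp, hq, hpq, hqp, sub_self, sub_zero]

lemma foldl_orth_aux {B : Type*} [NonUnitalRing B] (e : B) (he : e * e = e) :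
    ∀ (L : List B) (S : B), e * S = S → S * e = S →
      (∀ y ∈ L, e * y = y ∧ y * e = y ∧ S * y = 0) →
      L.Pairwise (fun x y => x * y = 0) →
      ((L.map (fun y => e - y)).foldl (· * ·) (e - S)) = e - (S + L.sum) := by
  intro L
  induction L with
  | nil => intro S _ _ _ _; simp
  | cons b L ih =>
    intro S h1 h2 hmem hpw
    obtain ⟨hb1, hb2, hb3⟩ := hmem b (List.mem_cons_self)
    have key : (e - S) * (e - b) = e - (S + b) := by
      rw [sub_mul, mul_sub, mul_sub, he, hb1, h2, hb3, sub_zero, sub_sub, add_comm b S]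
    rw [List.map_cons, List.foldl_cons, key,
      ih (S + b) (by rw [mul_add, h1, hb1]) (by rw [add_mul, h2, hb2])
        (fun y hy => ⟨(hmem y (List.mem_cons_of_mem b hy)).1,
          (hmem y (List.mem_cons_of_mem b hy)).2.1,
          by rw [add_mul, (hmem y (List.mem_cons_of_mem b hy)).2.2,
            (List.pairwise_cons.mp hpw).1 y hy, add_zero]⟩)
        (List.pairwise_cons.mp hpw).2]
    rw [List.sum_cons]
    abel

end CKLemmas
/-- Corollary 3.8. If `(μ, ν)` is a generalised cycle with an entrance `τ`
and `{t_λ}` is a Cuntz–Krieger family with `t_{s(τ)} ≠ 0`, then `t_ν t_ν*` is an infinite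
projection, via the partial isometry `w = t_ν t_μ*`.  Here `B` carries its canonical partial
order, encoded by `[PartialOrder B] [StarOrderedRing B]`. -/
theorem stmt6 {k : ℕ} (Λ : KGraph k) (hFA : Λ.FinitelyAligned)
    (mu nu τ : Λ.Path) (hgc : Λ.IsGenCycle mu nu) (hτ : Λ.IsEntrance mu nu τ)
    (B : Type*) [NonUnitalCStarAlgebra B] [PartialOrder B] [StarOrderedRing B]
    (f : CKFamily Λ B) (hnz : f.t (Λ.s τ) ≠ 0) :
    (f.t nu * star (f.t mu)) * star (f.t nu * star (f.t mu)) * (f.t nu * star (f.t mu)) =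
        f.t nu * star (f.t mu) ∧
    star (f.t nu * star (f.t mu)) * (f.t nu * star (f.t mu)) = f.t mu * star (f.t mu) ∧
    (f.t nu * star (f.t mu)) * star (f.t nu * star (f.t mu)) = f.t nu * star (f.t nu) ∧
    f.t mu * star (f.t mu) ≤ f.t nu * star (f.t nu) ∧
    f.t mu * star (f.t mu) ≠ f.t nu * star (f.t nu) ∧
    f.t (Λ.comp nu τ) * star (f.t (Λ.comp nu τ)) ≤
        f.t nu * star (f.t nu) - f.t mu * star (f.t mu) ∧
    f.t (Λ.comp nu τ) * star (f.t (Λ.comp nu τ)) ≠ 0 ∧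
    0 ≤ f.t (Λ.comp nu τ) * star (f.t (Λ.comp nu τ)) := by
  obtain ⟨hμν, hs, hrr, hcyc⟩ := hgc
  obtain ⟨hrτ, hent⟩ := hτ
  have hv : Λ.IsVertex (Λ.s mu) := Λ.d_s mu
  have hντ : Λ.s nu = Λ.r τ := hrτ.symm
  -- the partial isometry computations
  have hstar_w : star (f.t nu * star (f.t mu)) = f.t mu * star (f.t nu) := by
    rw [star_mul, star_star]
  have hww : (f.t nu * star (f.t mu)) * star (f.t nu * star (f.t mu)) =
      f.t nu * star (f.t nu) := by
    rw [hstar_w, mul_assoc (f.t nu), ← mul_assoc (star (f.t mu)), f.star_self mu,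
      ← mul_assoc, hs, f.mul_s nu]
  have hwsw : star (f.t nu * star (f.t mu)) * (f.t nu * star (f.t mu)) =
      f.t mu * star (f.t mu) := by
    rw [hstar_w, mul_assoc (f.t mu), ← mul_assoc (star (f.t nu)), f.star_self nu,
      ← hs, ← mul_assoc, f.mul_s mu]
  have hw1 : (f.t nu * star (f.t mu)) * star (f.t nu * star (f.t mu)) *
      (f.t nu * star (f.t mu)) = f.t nu * star (f.t mu) := by
    rw [hww, mul_assoc (f.t nu), ← mul_assoc (star (f.t nu)), f.star_self nu,
      ← mul_assoc, f.mul_s nu]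
  -- the exhaustive set E
  set E : Set Λ.Path := {a | Λ.s mu = Λ.r a ∧ Λ.comp mu a ∈ Λ.MCE mu nu} with hEdef
  have hEiff : ∀ a, a ∈ E ↔ (Λ.s mu = Λ.r a ∧ Λ.comp mu a ∈ Λ.MCE mu nu) := by
    intro a; rw [hEdef]; exact Iff.rfl
  have hdegE : ∀ a ∈ E, Λ.d mu + Λ.d a = Λ.d mu ⊔ Λ.d nu := by
    intro a ha
    obtain ⟨ha1, ha2⟩ := (hEiff a).mp ha
    rw [← Λ.d_comp mu a ha1]
    exact ha2.1
  have hEdeg : ∀ a ∈ E, ∀ b ∈ E, Λ.d a = Λ.d b := by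
    intro a ha b hb
    funext i
    have h1 := congrFun (hdegE a ha) i
    have h2 := congrFun (hdegE b hb) i
    simp only [Pi.add_apply] at h1 h2
    omega
  have horthE : ∀ a ∈ E, ∀ b ∈ E, a ≠ b →
      (f.t a * star (f.t a)) * (f.t b * star (f.t b)) = 0 := by
    intro a ha b hb hab
    have h0 : star (f.t a) * f.t b = 0 :=
      f.star_mul_of_MCE_empty (Λ.MCE_of_ne_same_deg (hEdeg a ha b hb) hab)
    rw [mul_assoc, ← mul_assoc (star (f.t a)), h0, zero_mul, mul_zero]
  have hEr : ∀ a ∈ E, f.t (Λ.s mu) * (f.t a * star (f.t a)) = f.t a * star (f.t a) := by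
    intro a ha
    have h1 : f.t (Λ.s mu) * f.t a = f.t a := by
      rw [((hEiff a).mp ha).1]; exact f.r_mul a
    rw [← mul_assoc, h1]
  have hEl : ∀ a ∈ E, (f.t a * star (f.t a)) * f.t (Λ.s mu) = f.t a * star (f.t a) := by
    intro a ha
    have := congrArg star (hEr a ha)
    rwa [star_mul, star_mul (f.t a), star_star, f.selfadjoint _ hv] at this
  have hEfin : E.Finite := by
    apply Set.Finite.of_finite_image (f := fun a => Λ.comp mu a)
    · apply Set.Finite.subset (hFA mu nu)
      rintro _ ⟨a, ha, rfl⟩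
      exact ((hEiff a).mp ha).2
    · intro a ha b hb hab
      exact Λ.cancel_left ((hEiff a).mp ha).1 ((hEiff b).mp hb).1 (hEdeg a ha b hb) hab
  have hEne : E.Nonempty := by
    obtain ⟨lam, hlam⟩ := hcyc (Λ.s mu) (Λ.r_vertex _ hv)
    rw [Λ.comp_id] at hlam
    obtain ⟨hd, ⟨α, hα1, hα2⟩, hβ⟩ := hlam
    refine ⟨α, (hEiff α).mpr ⟨hα1, ?_⟩⟩
    rw [hα2]
    exact ⟨hd, ⟨α, hα1, hα2⟩, hβ⟩
  have hEex : Λ.Exhaustive (Λ.s mu) E := by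
    intro lam hlamr
    obtain ⟨x, hx⟩ := hcyc lam hlamr
    obtain ⟨hdx, ⟨σ, hσ1, hσ2⟩, ⟨β, hβ1, hβ2⟩⟩ := hx
    have hslam : Λ.s mu = Λ.r lam := hlamr.symm
    have hσ1' : Λ.s lam = Λ.r σ := (Λ.s_comp mu lam hslam).symm.trans hσ1
    have hassoc : Λ.comp mu (Λ.comp lam σ) = Λ.comp nu β := by
      rw [← Λ.comp_assoc mu lam σ hslam hσ1', hσ2, ← hβ2]
    have hrls : Λ.s mu = Λ.r (Λ.comp lam σ) := by
      rw [Λ.r_comp lam σ hσ1']; exact hslam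
    obtain ⟨a, b, ha1, hb1, hab, hmem, ρ, hρ1, hρ2⟩ := Λ.restrict hrls hβ1 hassoc
    refine ⟨a, (hEiff a).mpr ⟨ha1, hmem⟩, ?_⟩
    obtain ⟨a', b', ha1', hb1', hab', hmem', -⟩ := Λ.restrict hσ1' hρ1 hρ2.symm
    exact ⟨Λ.comp lam a', hmem'⟩
  -- enumerate E as a list and apply (CK4)
  obtain ⟨a0, l0, hL0⟩ := List.exists_cons_of_ne_nil (l := hEfin.toFinset.toList)
    (by
      obtain ⟨x, hx⟩ := hEne
      intro h
      have : x ∈ hEfin.toFinset.toList := by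
        rw [Finset.mem_toList, Set.Finite.mem_toFinset]; exact hx
      rw [h] at this
      simp at this)
  have hLmem : ∀ x, x ∈ a0 :: l0 ↔ x ∈ E := by
    intro x
    rw [← hL0, Finset.mem_toList, Set.Finite.mem_toFinset]
  have ha0E : a0 ∈ E := (hLmem a0).mp (List.mem_cons_self)
  have hl0E : ∀ b ∈ l0, b ∈ E := fun b hb => (hLmem b).mp (List.mem_cons_of_mem a0 hb)
  have hnd : (a0 :: l0).Nodup := by rw [← hL0]; exact Finset.nodup_toList _
  have hck4 := f.ck4 (Λ.s mu) hv a0 l0 hnd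
    (fun lam hlam => ((hEiff lam).mp ((hLmem lam).mp hlam)).1.symm)
    (by
      intro x hx
      obtain ⟨m, hm, hmce⟩ := hEex x hx
      exact ⟨m, (hLmem m).mpr hm, hmce⟩)
  have hmap : (l0.map fun lam => f.t (Λ.s mu) - f.t lam * star (f.t lam)) =
      ((l0.map fun lam => f.t lam * star (f.t lam)).map fun y => f.t (Λ.s mu) - y) := by
    rw [List.map_map]; rfl
  rw [hmap] at hck4
  have ha0nl : a0 ∉ l0 := (List.nodup_cons.mp hnd).1
  have hndl0 : l0.Nodup := (List.nodup_cons.mp hnd).2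
  have hfold := foldl_orth_aux (f.t (Λ.s mu)) (f.idem _ hv)
    (l0.map fun lam => f.t lam * star (f.t lam)) (f.t a0 * star (f.t a0))
    (hEr a0 ha0E) (hEl a0 ha0E)
    (by
      rintro y hy
      obtain ⟨b, hb, rfl⟩ := List.mem_map.mp hy
      exact ⟨hEr b (hl0E b hb), hEl b (hl0E b hb),
        horthE a0 ha0E b (hl0E b hb) (fun h => ha0nl (h ▸ hb))⟩)
    (List.pairwise_map.mpr (hndl0.imp_of_mem
      (fun {a b} ha hb hne => horthE a (hl0E a ha) b (hl0E b hb) hne)))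
  rw [hfold] at hck4
  have hTv : f.t (Λ.s mu) =
      ((a0 :: l0).map fun lam => f.t lam * star (f.t lam)).sum := by
    rw [List.map_cons, List.sum_cons]
    exact sub_eq_zero.mp hck4
  -- ν absorbs everything over μE
  have hμx : ∀ a ∈ E, f.t mu * (f.t a * star (f.t a)) * star (f.t mu) =
      f.t (Λ.comp mu a) * star (f.t (Λ.comp mu a)) := by
    intro a ha
    have ha1 := ((hEiff a).mp ha).1
    rw [← mul_assoc, f.mul_eq mu a ha1, mul_assoc, ← star_mul, f.mul_eq mu a ha1]
  have hνabs : ∀ a ∈ E, (f.t nu * star (f.t nu)) *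
      (f.t (Λ.comp mu a) * star (f.t (Λ.comp mu a))) =
      f.t (Λ.comp mu a) * star (f.t (Λ.comp mu a)) := by
    intro a ha
    obtain ⟨hd, -, β, hβ1, hβ2⟩ := ((hEiff a).mp ha).2
    suffices h : (f.t nu * star (f.t nu)) * f.t (Λ.comp mu a) = f.t (Λ.comp mu a) by
      rw [← mul_assoc, h]
    rw [← hβ2, ← f.mul_eq nu β hβ1, mul_assoc (f.t nu), ← mul_assoc (star (f.t nu)),
      f.star_self nu]
    have h2 : f.t (Λ.s nu) * f.t β = f.t β := by rw [hβ1]; exact f.r_mul β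
    rw [h2]
  have hsum : ∀ (l : List Λ.Path), (∀ a ∈ l, a ∈ E) →
      (f.t nu * star (f.t nu)) *
        (f.t mu * (l.map fun a => f.t a * star (f.t a)).sum * star (f.t mu)) =
      f.t mu * (l.map fun a => f.t a * star (f.t a)).sum * star (f.t mu) := by
    intro l
    induction l with
    | nil => intro _; simp
    | cons b l ih =>
      intro hmem
      have hb := hmem b (List.mem_cons_self)
      simp only [List.map_cons, List.sum_cons, mul_add, add_mul]
      rw [hμx b hb, ih (fun a ha => hmem a (List.mem_cons_of_mem b ha)), hνabs b hb]
  have hμexp : f.t mu * star (f.t mu) =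
      f.t mu * ((a0 :: l0).map fun lam => f.t lam * star (f.t lam)).sum * star (f.t mu) := by
    rw [← hTv, f.mul_s mu]
  have hpνpμ : (f.t nu * star (f.t nu)) * (f.t mu * star (f.t mu)) =
      f.t mu * star (f.t mu) := by
    rw [hμexp]
    exact hsum (a0 :: l0) (fun a ha => (hLmem a).mp ha)
  have hpμpν : (f.t mu * star (f.t mu)) * (f.t nu * star (f.t nu)) =
      f.t mu * star (f.t mu) := by
    have := congrArg star hpνpμ
    rwa [star_mul, f.p_selfadj mu, f.p_selfadj nu] at this
  -- q = pν - pμ is a projection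
  have hq : (f.t nu * star (f.t nu) - f.t mu * star (f.t mu)) *
      (f.t nu * star (f.t nu) - f.t mu * star (f.t mu)) =
      f.t nu * star (f.t nu) - f.t mu * star (f.t mu) := by
    rw [sub_mul, mul_sub, mul_sub, f.pp nu, f.pp mu, hpνpμ, hpμpν, sub_self, sub_zero]
  have hqstar : star (f.t nu * star (f.t nu) - f.t mu * star (f.t mu)) =
      f.t nu * star (f.t nu) - f.t mu * star (f.t mu) := by
    rw [star_sub, f.p_selfadj nu, f.p_selfadj mu]
  have hqnonneg : (0 : B) ≤ f.t nu * star (f.t nu) - f.t mu * star (f.t mu) := by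
    have := star_mul_self_nonneg (f.t nu * star (f.t nu) - f.t mu * star (f.t mu))
    rwa [hqstar, hq] at this
  -- the entrance projection
  have hpνpnt : (f.t nu * star (f.t nu)) *
      (f.t (Λ.comp nu τ) * star (f.t (Λ.comp nu τ))) =
      f.t (Λ.comp nu τ) * star (f.t (Λ.comp nu τ)) := by
    suffices h : (f.t nu * star (f.t nu)) * f.t (Λ.comp nu τ) = f.t (Λ.comp nu τ) by
      rw [← mul_assoc, h]
    rw [← f.mul_eq nu τ hντ, mul_assoc (f.t nu), ← mul_assoc (star (f.t nu)),
      f.star_self nu]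
    have h2 : f.t (Λ.s nu) * f.t τ = f.t τ := by rw [hντ]; exact f.r_mul τ
    rw [h2]
  have hpμpnt : (f.t mu * star (f.t mu)) *
      (f.t (Λ.comp nu τ) * star (f.t (Λ.comp nu τ))) = 0 := by
    have h0 : star (f.t mu) * f.t (Λ.comp nu τ) = 0 := by
      apply f.star_mul_of_MCE_empty
      rw [Λ.MCE_comm]
      exact hent
    rw [mul_assoc, ← mul_assoc (star (f.t mu)), h0, zero_mul, mul_zero]
  have hqpnt : (f.t nu * star (f.t nu) - f.t mu * star (f.t mu)) *
      (f.t (Λ.comp nu τ) * star (f.t (Λ.comp nu τ))) =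
      f.t (Λ.comp nu τ) * star (f.t (Λ.comp nu τ)) := by
    rw [sub_mul, hpνpnt, hpμpnt, sub_zero]
  have hpntq : (f.t (Λ.comp nu τ) * star (f.t (Λ.comp nu τ))) *
      (f.t nu * star (f.t nu) - f.t mu * star (f.t mu)) =
      f.t (Λ.comp nu τ) * star (f.t (Λ.comp nu τ)) := by
    have := congrArg star hqpnt
    rwa [star_mul, hqstar, f.p_selfadj (Λ.comp nu τ)] at this
  have h6 : f.t (Λ.comp nu τ) * star (f.t (Λ.comp nu τ)) ≤
      f.t nu * star (f.t nu) - f.t mu * star (f.t mu) := by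
    rw [← sub_nonneg]
    have hsq : (f.t nu * star (f.t nu) - f.t mu * star (f.t mu) -
        f.t (Λ.comp nu τ) * star (f.t (Λ.comp nu τ))) *
        (f.t nu * star (f.t nu) - f.t mu * star (f.t mu) -
        f.t (Λ.comp nu τ) * star (f.t (Λ.comp nu τ))) =
        f.t nu * star (f.t nu) - f.t mu * star (f.t mu) -
        f.t (Λ.comp nu τ) * star (f.t (Λ.comp nu τ)) := by
      exact proj_sub_proj hq (f.pp (Λ.comp nu τ)) hqpnt hpntq
    have hsa : star (f.t nu * star (f.t nu) - f.t mu * star (f.t mu) -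
        f.t (Λ.comp nu τ) * star (f.t (Λ.comp nu τ))) =
        f.t nu * star (f.t nu) - f.t mu * star (f.t mu) -
        f.t (Λ.comp nu τ) * star (f.t (Λ.comp nu τ)) := by
      rw [star_sub, hqstar, f.p_selfadj (Λ.comp nu τ)]
    have := star_mul_self_nonneg (f.t nu * star (f.t nu) - f.t mu * star (f.t mu) -
      f.t (Λ.comp nu τ) * star (f.t (Λ.comp nu τ)))
    rwa [hsa, hsq] at this
  have h8 : (0 : B) ≤ f.t (Λ.comp nu τ) * star (f.t (Λ.comp nu τ)) := by
    have := star_mul_self_nonneg (star (f.t (Λ.comp nu τ)))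
    rwa [star_star] at this
  have h7 : f.t (Λ.comp nu τ) * star (f.t (Λ.comp nu τ)) ≠ 0 := by
    intro h
    have h1 : f.t (Λ.comp nu τ) = 0 := (CStarRing.mul_star_self_eq_zero_iff _).mp h
    have h2 : f.t (Λ.s τ) = 0 := by
      rw [← Λ.s_comp nu τ hντ, ← f.star_self (Λ.comp nu τ), h1, mul_zero]
    exact hnz h2
  have h5 : f.t mu * star (f.t mu) ≠ f.t nu * star (f.t nu) := by
    intro h
    have hz : f.t nu * star (f.t nu) - f.t mu * star (f.t mu) = 0 := by
      rw [h, sub_self]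
    apply h7
    exact le_antisymm (hz ▸ h6) h8
  exact ⟨hw1, hwsw, hww, sub_nonneg.mp hqnonneg, h5, h6, h7, h8⟩
end Aux
end

section
/- Let Λ be a finitely aligned k-graph and let H ⊆ Λ⁰ be hereditary, i.e. v ∈ H and λ ∈ vΛ imply s(λ) ∈ H. Set ΛH := {λ ∈ Λ : s(λ) ∈ H}. Then Λ ∖ ΛH is a sub-k-graph of Λ (a subcategory closed under the factorisations of its members, with the restricted degree functor), for μ, ν ∈ Λ ∖ ΛH the minimal common extensions computed in Λ ∖ ΛH satisfy MCE_{Λ∖ΛH}(μ, ν) = MCE_Λ(μ, ν) ∖ ΛH, and a pair (μ, ν) ∈ (Λ ∖ ΛH) × (Λ ∖ ΛH) is a generalised cycle in the k-graph Λ ∖ ΛH if and only if d(μ) ≠ d(ν), s(μ) = s(ν), r(μ) = r(ν), and for every τ ∈ s(μ)Λ with s(τ) ∉ H the set MCE_Λ(ν, μτ) ∖ ΛH is nonempty. -/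
open scoped ComplexOrder ENat

/-- from Corollary 3.11. For a hereditary set `H` of vertices,
`G = Λ ∖ ΛH` is a sub-`k`-graph, its minimal common extensions are
`MCE_Λ(μ,ν) ∖ ΛH`, and its generalised cycles are characterised as stated. -/
theorem stmt7 {k : ℕ} (Λ : KGraph k) (hFA : Λ.FinitelyAligned)
    (H : Set Λ.Path) (hH : ∀ v ∈ H, Λ.IsVertex v)
    (hher : ∀ v ∈ H, ∀ lam, Λ.r lam = v → Λ.s lam ∈ H) :
    -- `Λ ∖ ΛH` is a sub-`k`-graph: closed under range, source, composition and factorisation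
    (∀ lam : Λ.Path, Λ.s lam ∉ H → Λ.r lam ∉ H ∧ Λ.s (Λ.r lam) ∉ H ∧ Λ.s (Λ.s lam) ∉ H) ∧
    (∀ mu nu : Λ.Path, Λ.s mu = Λ.r nu → Λ.s nu ∉ H → Λ.s (Λ.comp mu nu) ∉ H) ∧
    (∀ lam : Λ.Path, Λ.s lam ∉ H → ∀ m n : Fin k → ℕ, Λ.d lam = m + n →
      ∃ mu nu : Λ.Path, Λ.s mu ∉ H ∧ Λ.s nu ∉ H ∧ Λ.d mu = m ∧ Λ.d nu = n ∧
        Λ.s mu = Λ.r nu ∧ Λ.comp mu nu = lam) ∧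
    -- minimal common extensions in the sub-`k`-graph
    (∀ mu nu : Λ.Path, Λ.s mu ∉ H → Λ.s nu ∉ H →
      Λ.MCEWithin {lam | Λ.s lam ∉ H} mu nu =
        Λ.MCE mu nu \ {lam : Λ.Path | Λ.s lam ∈ H}) ∧
    -- characterisation of generalised cycles of the sub-`k`-graph
    (∀ mu nu : Λ.Path, Λ.s mu ∉ H → Λ.s nu ∉ H →
      (Λ.IsGenCycleWithin {lam | Λ.s lam ∉ H} mu nu ↔
        (Λ.d mu ≠ Λ.d nu ∧ Λ.s mu = Λ.s nu ∧ Λ.r mu = Λ.r nu ∧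
          ∀ τ, Λ.r τ = Λ.s mu → Λ.s τ ∉ H →
            (Λ.MCE nu (Λ.comp mu τ) \ {lam : Λ.Path | Λ.s lam ∈ H}).Nonempty))) := by
  have hs_not : ∀ lam : Λ.Path, Λ.s lam ∉ H → Λ.r lam ∉ H := by
    intro lam h hr; exact h (hher _ hr lam rfl)
  have subk2 : ∀ mu nu : Λ.Path, Λ.s mu = Λ.r nu → Λ.s nu ∉ H → Λ.s (Λ.comp mu nu) ∉ H := by
    intro mu nu hc h; rw [Λ.s_comp mu nu hc]; exact h
  have mce_symm : ∀ mu nu, Λ.MCE mu nu = Λ.MCE nu mu := by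
    intro mu nu; ext lam
    constructor
    · rintro ⟨hd, ha, hb⟩; exact ⟨by rw [hd, sup_comm], hb, ha⟩
    · rintro ⟨hd, ha, hb⟩; exact ⟨by rw [hd, sup_comm], hb, ha⟩
  have mcew : ∀ mu nu : Λ.Path, Λ.s mu ∉ H → Λ.s nu ∉ H →
      Λ.MCEWithin {lam | Λ.s lam ∉ H} mu nu =
        Λ.MCE mu nu \ {lam : Λ.Path | Λ.s lam ∈ H} := by
    intro mu nu hmu hnu
    ext lam
    constructor
    · rintro ⟨hlam, hd, ⟨α, hα, hcα, heα⟩, ⟨β, hβ, hcβ, heβ⟩⟩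
      exact ⟨⟨hd, ⟨α, hcα, heα⟩, ⟨β, hcβ, heβ⟩⟩, hlam⟩
    · rintro ⟨⟨hd, ⟨α, hcα, heα⟩, ⟨β, hcβ, heβ⟩⟩, hlam⟩
      have hlam' : Λ.s lam ∉ H := hlam
      refine ⟨hlam', hd, ⟨α, ?_, hcα, heα⟩, ⟨β, ?_, hcβ, heβ⟩⟩
      · have hsa : Λ.s α = Λ.s lam := by rw [← heα]; exact (Λ.s_comp mu α hcα).symm
        show Λ.s α ∉ H
        rw [hsa]; exact hlam'
      · have hsb : Λ.s β = Λ.s lam := by rw [← heβ]; exact (Λ.s_comp nu β hcβ).symm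
        show Λ.s β ∉ H
        rw [hsb]; exact hlam'
  have eq_of_deg : ∀ (mu α : Λ.Path), Λ.s mu = Λ.r α →
      Λ.d (Λ.comp mu α) = Λ.d mu → Λ.comp mu α = mu := by
    intro mu α hc hd
    have hdc := Λ.d_comp mu α hc
    have hα : Λ.d α = 0 := by
      have h1 : Λ.d mu + Λ.d α = Λ.d mu := by rw [← hdc, hd]
      funext i
      have h2 := congrFun h1 i
      simp only [Pi.add_apply] at h2
      simpa using Nat.add_left_cancel (by omega : Λ.d mu i + Λ.d α i = Λ.d mu i + 0)
    have hαv : α = Λ.s mu := by rw [hc, Λ.r_vertex α hα]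
    rw [hαv, Λ.comp_id]
  refine ⟨?_, subk2, ?_, mcew, ?_⟩
  · intro lam h
    have hr := hs_not lam h
    rw [Λ.s_vertex _ (Λ.d_r lam), Λ.s_vertex _ (Λ.d_s lam)]
    exact ⟨hr, hr, h⟩
  · intro lam h m n hd
    obtain ⟨⟨mu, nu⟩, ⟨hdm, hdn, hc, heq⟩, -⟩ := Λ.factor lam m n hd
    have hsnu : Λ.s nu ∉ H := by
      rw [← heq] at h; rwa [Λ.s_comp mu nu hc] at h
    refine ⟨mu, nu, ?_, hsnu, hdm, hdn, hc, heq⟩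
    rw [hc]; exact hs_not nu hsnu
  · intro mu nu hmu hnu
    constructor
    · rintro ⟨hne, hss, hrr, hmce⟩
      refine ⟨?_, hss, hrr, ?_⟩
      · intro hd
        have hmem : Λ.s mu ∈ {lam | Λ.s lam ∉ H} := by
          show Λ.s (Λ.s mu) ∉ H
          rw [Λ.s_vertex _ (Λ.d_s mu)]; exact hmu
        obtain ⟨lam, hlam⟩ := hmce (Λ.s mu) hmem (Λ.r_vertex _ (Λ.d_s mu))
        rw [Λ.comp_id] at hlam
        obtain ⟨-, hdl, ⟨α, -, hcα, heα⟩, ⟨β, -, hcβ, heβ⟩⟩ := hlam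
        have hd1 : Λ.d lam = Λ.d mu := by rw [hdl, ← hd, sup_idem]
        have hd2 : Λ.d lam = Λ.d nu := by rw [hd1, hd]
        have e1 : lam = mu := by
          rw [← heα]; exact eq_of_deg mu α hcα (by rw [heα]; exact hd1)
        have e2 : lam = nu := by
          rw [← heβ]; exact eq_of_deg nu β hcβ (by rw [heβ]; exact hd2)
        exact hne (e1.symm.trans e2)
      · intro τ hrτ hsτ
        have h1 := hmce τ hsτ hrτ
        rw [mcew (Λ.comp mu τ) nu (subk2 mu τ hrτ.symm hsτ) hnu] at h1
        rwa [mce_symm nu (Λ.comp mu τ)]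
    · rintro ⟨hdne, hss, hrr, hmce⟩
      refine ⟨fun h => hdne (congrArg Λ.d h), hss, hrr, ?_⟩
      intro τ hτS hrτ
      have h1 := hmce τ hrτ hτS
      rw [mce_symm nu (Λ.comp mu τ)] at h1
      rwa [mcew (Λ.comp mu τ) nu (subk2 mu τ hrτ.symm hτS) hnu]
end
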